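/- arXiv:math/0508482 — 6 statements merged into one kernel-verified Lean document; each statement's English description precedes it below -/
import Mathlib

section
/- Let A be a self-adjoint n×n complex matrix with eigenvalues λ₁ ≥ ⋯ ≥ λₙ (with multiplicity) and diagonal entries p₁ ≥ ⋯ ≥ pₙ, both listed in decreasing order. Then p₁ + ⋯ + p_k ≤ λ₁ + ⋯ + λ_k for every 1 ≤ k ≤ n, with equality when k = n. -/
private lemma schur_key (n k : ℕ) (hk : k < n) (lam t : Fin n → ℝ) (hlam : Antitone lam)
    (ht0 : ∀ j, 0 ≤ t j) (ht1 : ∀ j, t j ≤ 1) (hsum : ∑ j, t j = (k : ℝ)) :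
    ∑ j, t j * lam j ≤ ∑ j ∈ Finset.univ.filter (fun j : Fin n => (j : ℕ) < k), lam j := by
  classical
  set c := lam ⟨k, hk⟩ with hc
  set χ : Fin n → ℝ := fun j => if (j : ℕ) < k then 1 else 0 with hχ
  have hfilt : Finset.univ.filter (fun j : Fin n => (j : ℕ) < k) = Finset.Iio ⟨k, hk⟩ := by
    ext j; simp [Fin.lt_def]
  have hχsum : ∑ j, χ j = (k : ℝ) := by
    simp only [hχ, Finset.sum_boole]
    rw [hfilt, Fin.card_Iio]
  have hfsum : ∑ j ∈ Finset.univ.filter (fun j : Fin n => (j : ℕ) < k), lam j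
      = ∑ j, χ j * lam j := by
    rw [Finset.sum_filter]
    refine Finset.sum_congr rfl fun j _ => ?_
    by_cases h : (j : ℕ) < k <;> simp [hχ, h]
  have hterm : ∀ j, (t j - χ j) * (lam j - c) ≤ 0 := by
    intro j
    by_cases h : (j : ℕ) < k
    · apply mul_nonpos_of_nonpos_of_nonneg
      · simp [hχ, h]; linarith [ht1 j]
      · have : j ≤ (⟨k, hk⟩ : Fin n) := by
          rw [Fin.le_def]; exact Nat.le_of_lt h
        linarith [hlam this]
    · apply mul_nonpos_of_nonneg_of_nonpos
      · simp [hχ, h]; exact ht0 j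
      · have : (⟨k, hk⟩ : Fin n) ≤ j := by
          rw [Fin.le_def]; exact Nat.le_of_not_lt h
        linarith [hlam this]
  have hsumterm : ∑ j, (t j - χ j) * (lam j - c) ≤ 0 :=
    Finset.sum_nonpos fun j _ => hterm j
  have hexp : ∑ j, (t j - χ j) * (lam j - c)
      = ∑ j, t j * lam j - ∑ j, χ j * lam j - c * (∑ j, t j) + c * (∑ j, χ j) := by
    rw [Finset.mul_sum, Finset.mul_sum, ← Finset.sum_sub_distrib, ← Finset.sum_sub_distrib,
      ← Finset.sum_add_distrib]
    refine Finset.sum_congr rfl fun j _ => ?_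
    ring
  rw [hfsum]
  rw [hexp, hsum, hχsum] at hsumterm
  linarith

/-- **Schur's theorem**: the decreasingly ordered diagonal `p` of a Hermitian matrix
is majorized by its decreasingly ordered eigenvalue list `lam`. -/
theorem schur_theorem (n : ℕ) (A : Matrix (Fin n) (Fin n) ℂ) (hA : A.IsHermitian)
    (lam p : Fin n → ℝ) (hlam : Antitone lam) (hp : Antitone p)
    (hlamA : ∃ σ : Equiv.Perm (Fin n), ∀ i, lam i = hA.eigenvalues (σ i))
    (hpA : ∃ σ : Equiv.Perm (Fin n), ∀ i, (p i : ℂ) = A (σ i) (σ i)) :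
    (∀ k : ℕ, k ≤ n →
      ∑ i ∈ Finset.univ.filter (fun i : Fin n => (i : ℕ) < k), p i ≤
      ∑ i ∈ Finset.univ.filter (fun i : Fin n => (i : ℕ) < k), lam i) ∧
    ∑ i, p i = ∑ i, lam i := by
  classical
  obtain ⟨σl, hσl⟩ := hlamA
  obtain ⟨σp, hσp⟩ := hpA
  set U : Matrix (Fin n) (Fin n) ℂ := (hA.eigenvectorUnitary : Matrix (Fin n) (Fin n) ℂ) with hU
  set μ : Fin n → ℝ := hA.eigenvalues with hμ
  set s : Fin n → Fin n → ℝ := fun i j => Complex.normSq (U i j) with hs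
  have hs0 : ∀ i j, 0 ≤ s i j := fun i j => Complex.normSq_nonneg _
  -- row sums are 1 : U * Uᴴ = 1
  have hUU : U * star U = 1 := (Matrix.mem_unitaryGroup_iff).mp hA.eigenvectorUnitary.2
  have hUU' : star U * U = 1 := (Matrix.mem_unitaryGroup_iff').mp hA.eigenvectorUnitary.2
  have hrow : ∀ i, ∑ j, s i j = 1 := by
    intro i
    have h1 : (U * star U) i i = 1 := by rw [hUU]; simp
    rw [Matrix.mul_apply] at h1
    have : ∑ j, U i j * star (U i j) = 1 := by
      simpa [Matrix.star_apply] using h1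
    have h2 : ∑ j, (Complex.normSq (U i j) : ℂ) = 1 := by
      simpa [Complex.mul_conj] using this
    have := congrArg Complex.re h2
    simpa [Complex.re_sum] using this
  have hcol : ∀ j, ∑ i, s i j = 1 := by
    intro j
    have h1 : (star U * U) j j = 1 := by rw [hUU']; simp
    rw [Matrix.mul_apply] at h1
    have : ∑ i, star (U i j) * U i j = 1 := by
      simpa [Matrix.star_apply] using h1
    have h2 : ∑ i, (Complex.normSq (U i j) : ℂ) = 1 := by
      have e : ∀ i, star (U i j) * U i j = (Complex.normSq (U i j) : ℂ) := by
        intro i; rw [mul_comm]; exact Complex.mul_conj _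
      rw [Finset.sum_congr rfl fun i _ => e i] at this
      exact this
    have := congrArg Complex.re h2
    simpa [Complex.re_sum] using this
  -- diagonal formula
  have hdiag : ∀ i, A i i = ∑ j, (s i j * μ j : ℝ) := by
    intro i
    conv_lhs => rw [hA.spectral_theorem, Unitary.conjStarAlgAut_apply]
    rw [Matrix.mul_apply]
    push_cast
    refine Finset.sum_congr rfl fun j _ => ?_
    rw [Matrix.mul_diagonal]
    simp only [Matrix.star_apply, Function.comp_apply]
    rw [mul_right_comm, Complex.star_def, Complex.mul_conj]
    push_cast
    rfl
  have hpform : ∀ i, p i = ∑ j, s (σp i) j * μ j := by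
    intro i
    have := (hσp i).trans (hdiag (σp i))
    exact_mod_cast this
  -- total sum equality
  have htot : ∑ i, p i = ∑ i, lam i := by
    have h1 : ∑ i, p i = ∑ i, ∑ j, s (σp i) j * μ j := Finset.sum_congr rfl fun i _ => hpform i
    have h2 : ∑ i, ∑ j, s (σp i) j * μ j = ∑ i : Fin n, ∑ j, s i j * μ j :=
      Equiv.sum_comp σp (fun i => ∑ j, s i j * μ j)
    rw [h1, h2, Finset.sum_comm]
    have h3 : ∀ j, ∑ i, s i j * μ j = μ j := by
      intro j; rw [← Finset.sum_mul, hcol, one_mul]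
    rw [Finset.sum_congr rfl fun j _ => h3 j]
    rw [show ∑ i, lam i = ∑ i, μ (σl i) from Finset.sum_congr rfl fun i _ => hσl i]
    exact (Equiv.sum_comp σl μ).symm
  refine ⟨fun k hk => ?_, htot⟩
  rcases eq_or_lt_of_le hk with heq | hk
  · have : Finset.univ.filter (fun i : Fin n => (i : ℕ) < k) = Finset.univ := by
      apply Finset.filter_true_of_mem; intro i _; exact lt_of_lt_of_le i.isLt heq.ge
    rw [this]; exact le_of_eq htot
  -- case k < n
  set I := Finset.univ.filter (fun i : Fin n => (i : ℕ) < k) with hI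
  have hIcard : I.card = k := by
    have : I = Finset.Iio (⟨k, hk⟩ : Fin n) := by ext j; simp [hI, Fin.lt_def]
    rw [this, Fin.card_Iio]
  set t : Fin n → ℝ := fun j => ∑ i ∈ I, s (σp i) j with ht
  have ht0 : ∀ j, 0 ≤ t j := fun j => Finset.sum_nonneg fun i _ => hs0 _ _
  have ht1 : ∀ j, t j ≤ 1 := by
    intro j
    calc t j ≤ ∑ i : Fin n, s (σp i) j :=
          Finset.sum_le_sum_of_subset_of_nonneg (Finset.subset_univ _)
            (fun i _ _ => hs0 _ _)
      _ = ∑ i, s i j := Equiv.sum_comp σp (fun i => s i j)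
      _ = 1 := hcol j
  have htsum : ∑ j, t j = (k : ℝ) := by
    rw [ht, Finset.sum_comm]
    rw [Finset.sum_congr rfl fun i _ => hrow (σp i)]
    simp [hIcard]
  have hleft : ∑ i ∈ I, p i = ∑ j, t j * μ j := by
    rw [Finset.sum_congr rfl fun i (_ : i ∈ I) => hpform i, Finset.sum_comm]
    refine Finset.sum_congr rfl fun j _ => ?_
    rw [ht, Finset.sum_mul]
  -- reindex by σl
  have hre : ∑ j, t j * μ j = ∑ j, (t (σl j)) * lam j := by
    rw [← Equiv.sum_comp σl (fun j => t j * μ j)]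
    exact Finset.sum_congr rfl fun j _ => by rw [hσl j]
  rw [hleft, hre]
  exact schur_key n k hk lam (fun j => t (σl j)) hlam (fun j => ht0 _) (fun j => ht1 _)
    (by rw [Equiv.sum_comp σl t, htsum])
end

section
/- Let p = (p₁, …, pₙ) and λ = (λ₁, …, λₙ) be decreasing sequences of nonnegative real numbers satisfying p₁ + ⋯ + p_k ≤ λ₁ + ⋯ + λ_k for k = 1, …, n. Then there exists a decreasing sequence μ = (μ₁, …, μₙ) with 0 ≤ μ_k ≤ λ_k and p₁ + ⋯ + p_k ≤ μ₁ + ⋯ + μ_k for every 1 ≤ k ≤ n, and with p₁ + ⋯ + pₙ = μ₁ + ⋯ + μₙ. -/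
/-- Lemma 1: given decreasing nonnegative `p`, `lam` with the partial sums of `p`
dominated by those of `lam`, the entries of `lam` can be reduced to a decreasing
sequence `mu` with `0 ≤ mu k ≤ lam k`, preserving the partial sum inequalities,
and with total sums of `p` and `mu` equal. -/
theorem reduce_eigenvalue_list (n : ℕ) (p lam : Fin n → ℝ)
    (hp : Antitone p) (hlam : Antitone lam)
    (hp0 : ∀ i, 0 ≤ p i) (hlam0 : ∀ i, 0 ≤ lam i)
    (hineq : ∀ k : ℕ, k ≤ n →
      ∑ i ∈ Finset.univ.filter (fun i : Fin n => (i : ℕ) < k), p i ≤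
      ∑ i ∈ Finset.univ.filter (fun i : Fin n => (i : ℕ) < k), lam i) :
    ∃ mu : Fin n → ℝ, Antitone mu ∧
      (∀ i, 0 ≤ mu i ∧ mu i ≤ lam i) ∧
      (∀ k : ℕ, k ≤ n →
        ∑ i ∈ Finset.univ.filter (fun i : Fin n => (i : ℕ) < k), p i ≤
        ∑ i ∈ Finset.univ.filter (fun i : Fin n => (i : ℕ) < k), mu i) ∧
      ∑ i, p i = ∑ i, mu i := by
  classical
  set C : ℝ := ∑ i, p i with hC
  set Ls : ℕ → ℝ := fun k => ∑ i ∈ Finset.univ.filter (fun i : Fin n => (i : ℕ) < k), lam i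
    with hLs
  set M : ℕ → ℝ := fun k => min (Ls k) C with hM
  -- filter step lemma
  have hstep : ∀ (f : Fin n → ℝ) (k : ℕ) (hk : k < n),
      ∑ i ∈ Finset.univ.filter (fun i : Fin n => (i : ℕ) < k + 1), f i =
      (∑ i ∈ Finset.univ.filter (fun i : Fin n => (i : ℕ) < k), f i) + f ⟨k, hk⟩ := by
    intro f k hk
    have hset : Finset.univ.filter (fun i : Fin n => (i : ℕ) < k + 1) =
        insert (⟨k, hk⟩ : Fin n) (Finset.univ.filter (fun i : Fin n => (i : ℕ) < k)) := by
      ext i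
      simp [Nat.lt_succ_iff_lt_or_eq, Fin.ext_iff, or_comm]
      omega
    rw [hset, Finset.sum_insert (by simp)]
    ring
  have hfull : ∀ (f : Fin n → ℝ),
      ∑ i ∈ Finset.univ.filter (fun i : Fin n => (i : ℕ) < n), f i = ∑ i, f i := by
    intro f
    congr 1
    ext i
    simp [i.isLt]
  have hLs_mono : Monotone Ls := by
    intro a b hab
    apply Finset.sum_le_sum_of_subset_of_nonneg
    · intro i hi
      simp only [Finset.mem_filter] at hi ⊢
      exact ⟨hi.1, hi.2.trans_le hab⟩
    · intro i _ _
      exact hlam0 i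
  have hLs_step : ∀ (k : ℕ) (hk : k < n), Ls (k + 1) = Ls k + lam ⟨k, hk⟩ := by
    intro k hk
    exact hstep lam k hk
  have hC0 : 0 ≤ C := Finset.sum_nonneg fun i _ => hp0 i
  have hPs_le_C : ∀ k : ℕ, k ≤ n →
      ∑ i ∈ Finset.univ.filter (fun i : Fin n => (i : ℕ) < k), p i ≤ C := by
    intro k hk
    rw [hC, ← hfull p]
    apply Finset.sum_le_sum_of_subset_of_nonneg
    · intro i hi
      simp only [Finset.mem_filter] at hi ⊢
      exact ⟨hi.1, hi.2.trans_le hk⟩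
    · intro i _ _
      exact hp0 i
  have hM_mono : Monotone M := fun a b hab => min_le_min (hLs_mono hab) le_rfl
  -- the candidate
  set mu : Fin n → ℝ := fun i => M ((i : ℕ) + 1) - M (i : ℕ) with hmu
  -- telescoping
  have htel : ∀ k : ℕ, k ≤ n →
      ∑ i ∈ Finset.univ.filter (fun i : Fin n => (i : ℕ) < k), mu i = M k := by
    intro k hk
    induction k with
    | zero =>
      have : (Finset.univ.filter (fun i : Fin n => (i : ℕ) < 0)) = ∅ := by simp
      simp [this, hM, hLs, min_eq_left hC0]
    | succ m ih =>
      have hm : m < n := hk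
      rw [hstep mu m hm, ih (le_of_lt hm)]
      simp [hmu]
  -- nonneg and ≤ lam
  have hmu_nonneg : ∀ i : Fin n, 0 ≤ mu i := by
    intro i
    simp only [hmu, sub_nonneg]
    exact hM_mono (Nat.le_succ _)
  have hmu_le : ∀ i : Fin n, mu i ≤ lam i := by
    intro i
    simp only [hmu, hM]
    have h1 : Ls ((i : ℕ) + 1) = Ls i + lam i := by
      have := hLs_step i i.isLt
      simpa using this
    rw [h1]
    rcases le_total (Ls i) C with h | h
    · rw [min_eq_left h]
      have : min (Ls ↑i + lam i) C ≤ Ls i + lam i := min_le_left _ _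
      linarith
    · rw [min_eq_right h]
      have h2 : C ≤ Ls ↑i + lam i := le_add_of_le_of_nonneg h (hlam0 i)
      rw [min_eq_right h2]
      linarith [hlam0 i]
  refine ⟨mu, ?_, fun i => ⟨hmu_nonneg i, hmu_le i⟩, ?_, ?_⟩
  · -- Antitone
    intro i j hij
    rcases eq_or_lt_of_le hij with rfl | hlt
    · exact le_rfl
    · by_cases hc : C ≤ Ls j
      · -- mu j = 0
        have hj1 : M ((j : ℕ) + 1) = C := min_eq_right (hc.trans (hLs_mono (Nat.le_succ _)))
        have hj2 : M (j : ℕ) = C := min_eq_right hc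
        have : mu j = 0 := by simp [hmu, hj1, hj2]
        rw [this]
        exact hmu_nonneg i
      · push_neg at hc
        have hij' : (i : ℕ) + 1 ≤ (j : ℕ) := hlt
        have h1 : Ls ((i : ℕ) + 1) ≤ Ls j := hLs_mono hij'
        have h2 : Ls (i : ℕ) ≤ Ls ((i : ℕ) + 1) := hLs_mono (Nat.le_succ _)
        have hmi : mu i = lam i := by
          have hi1 : M ((i : ℕ) + 1) = Ls ((i : ℕ) + 1) := min_eq_left (h1.trans hc.le)
          have hi2 : M (i : ℕ) = Ls (i : ℕ) := min_eq_left ((h2.trans h1).trans hc.le)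
          have := hLs_step i i.isLt
          simp only [hmu, hM, min_eq_left (h1.trans hc.le),
            min_eq_left ((h2.trans h1).trans hc.le), this]
          simp only [Fin.eta] at this ⊢
          rw [min_eq_left (by rw [← this]; exact h1.trans hc.le)]
          ring
        have hmj : mu j ≤ lam j := hmu_le j
        calc mu j ≤ lam j := hmj
          _ ≤ lam i := hlam hij
          _ = mu i := hmi.symm
  · -- partial sums
    intro k hk
    rw [htel k hk]
    exact le_min (hineq k hk) (hPs_le_C k hk)
  · -- total
    have := htel n le_rfl
    rw [hfull mu] at this
    rw [this, hM]
    have hLn : C ≤ Ls n := by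
      have := hineq n le_rfl
      rwa [hfull p, ← hC] at this
    simp [min_eq_right hLn]
end

section
/- Let H be a separable Hilbert space with orthonormal basis (eₖ), let A be a positive compact operator with eigenvalue list λ₁ ≥ λ₂ ≥ ⋯, and suppose L is a contraction on H such that ⟨L*ALeₖ, eₖ⟩ = pₖ where p₁ ≥ p₂ ≥ ⋯ ≥ 0. Then p₁ + ⋯ + pₙ ≤ λ₁ + ⋯ + λₙ for every n ≥ 1. -/
open scoped InnerProductSpace

/-- If `A` is a positive compact operator with eigenvalue list `lam` and `L` is a
contraction such that the diagonal of `L*AL` with respect to an orthonormal basis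
`e` is the decreasing nonnegative sequence `p`, then the partial sums of `p` are
dominated by those of `lam`. -/
theorem diagonal_of_compression_majorized {H : Type*} [NormedAddCommGroup H]
    [InnerProductSpace ℂ H] [CompleteSpace H]
    (e : HilbertBasis ℕ ℂ H)
    (A : H →L[ℂ] H) (hA : IsCompactOperator A) (hpos : A.IsPositive)
    (lam : ℕ → ℝ) (hmono : Antitone lam) (h0 : ∀ k, 0 ≤ lam k)
    (ξ : ℕ → H) (hON : Orthonormal ℂ ξ)
    (hrep : ∀ x, A x = ∑' k, lam k • ((⟪ξ k, x⟫_ℂ) • ξ k))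
    (L : H →L[ℂ] H) (hL : ‖L‖ ≤ 1)
    (p : ℕ → ℝ) (hpmono : Antitone p) (hp0 : ∀ k, 0 ≤ p k)
    (hdiag : ∀ k, ⟪e k, (ContinuousLinearMap.adjoint L * A * L) (e k)⟫_ℂ = (p k : ℂ)) :
    ∀ n : ℕ, ∑ k ∈ Finset.range n, p k ≤ ∑ k ∈ Finset.range n, lam k := by
  classical
  intro n
  set c : ℕ → ℕ → ℝ := fun j k => ‖⟪ξ j, L (e k)⟫_ℂ‖ ^ 2 with hc
  have hc0 : ∀ j k, 0 ≤ c j k := fun j k => sq_nonneg _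
  have hbes : ∀ x : H, Summable fun j => ‖⟪ξ j, x⟫_ℂ‖ ^ 2 :=
    hON.inner_products_summable
  have hlam_bd : ∀ j, lam j ≤ lam 0 := fun j => hmono (Nat.zero_le j)
  -- ‖L x‖ ≤ ‖x‖
  have hLx : ∀ x : H, ‖L x‖ ≤ ‖x‖ := by
    intro x
    calc ‖L x‖ ≤ ‖L‖ * ‖x‖ := L.le_opNorm x
    _ ≤ 1 * ‖x‖ := by gcongr
    _ = ‖x‖ := one_mul _
  -- rewrite each term of the representation as a single smul
  have hterm : ∀ (x : H) (j : ℕ), lam j • ((⟪ξ j, x⟫_ℂ) • ξ j)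
      = ((lam j : ℂ) * ⟪ξ j, x⟫_ℂ) • ξ j := by
    intro x j
    rw [← smul_assoc]
    norm_cast
  -- summability of representation series
  have hsumrep : ∀ x : H, Summable fun j => lam j • ((⟪ξ j, x⟫_ℂ) • ξ j) := by
    intro x
    have key : Summable fun j => ‖(lam j : ℂ) * ⟪ξ j, x⟫_ℂ‖ ^ 2 := by
      refine Summable.of_nonneg_of_le (fun j => by positivity) (fun j => ?_)
        ((hbes x).mul_left ((lam 0) ^ 2))
      have heq : ‖(lam j : ℂ) * ⟪ξ j, x⟫_ℂ‖ ^ 2 = lam j ^ 2 * ‖⟪ξ j, x⟫_ℂ‖ ^ 2 := by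
        rw [norm_mul, mul_pow, Complex.norm_real, Real.norm_eq_abs, sq_abs]
      rw [heq]
      have h1 : lam j ^ 2 ≤ lam 0 ^ 2 := by nlinarith [h0 j, hlam_bd j]
      exact mul_le_mul_of_nonneg_right h1 (sq_nonneg _)
    have h2 := (hON.orthogonalFamily.summable_iff_norm_sq_summable
      (fun j => (lam j : ℂ) * ⟪ξ j, x⟫_ℂ)).2 (by simpa using key)
    refine h2.congr fun j => ?_
    rw [LinearIsometry.toSpanSingleton_apply, ← hterm]
  -- diagonal formula
  have hmulsummable : ∀ k, Summable fun j => lam j * c j k := by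
    intro k
    refine Summable.of_nonneg_of_le (fun j => mul_nonneg (h0 j) (hc0 j k)) (fun j => ?_)
      ((hbes (L (e k))).mul_left (lam 0))
    exact mul_le_mul_of_nonneg_right (hlam_bd j) (hc0 j k)
  have hpk : ∀ k, p k = ∑' j, lam j * c j k := by
    intro k
    have h1 : (p k : ℂ) = ⟪L (e k), A (L (e k))⟫_ℂ := by
      rw [← hdiag k]
      simp [ContinuousLinearMap.mul_apply, ContinuousLinearMap.adjoint_inner_right]
    rw [hrep (L (e k))] at h1
    have h2 : ⟪L (e k), ∑' j, lam j • ((⟪ξ j, L (e k)⟫_ℂ) • ξ j)⟫_ℂ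
        = ∑' j, ((lam j * c j k : ℝ) : ℂ) := by
      calc ⟪L (e k), ∑' j, lam j • ((⟪ξ j, L (e k)⟫_ℂ) • ξ j)⟫_ℂ
          = (innerSL ℂ (L (e k))) (∑' j, lam j • ((⟪ξ j, L (e k)⟫_ℂ) • ξ j)) := rfl
      _ = ∑' j, (innerSL ℂ (L (e k))) (lam j • ((⟪ξ j, L (e k)⟫_ℂ) • ξ j)) :=
          (innerSL ℂ (L (e k))).map_tsum (hsumrep (L (e k)))
      _ = ∑' j, ((lam j * c j k : ℝ) : ℂ) := by
          congr 1
          funext j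
          rw [innerSL_apply_apply, hterm, inner_smul_right, mul_assoc,
            ← inner_conj_symm (L (e k)) (ξ j), Complex.mul_conj]
          rw [hc]
          push_cast [Complex.normSq_eq_norm_sq]
          ring
    have h3 : ((∑' j, lam j * c j k : ℝ) : ℂ) = ∑' j, ((lam j * c j k : ℝ) : ℂ) := by
      simpa using Complex.ofRealCLM.map_tsum (hmulsummable k)
    rw [h2, ← h3] at h1
    exact_mod_cast h1
  -- column bound: for each j, partial row sums bounded by 1
  have hB2 : ∀ j, ∑ k ∈ Finset.range n, c j k ≤ 1 := by
    intro j
    set x := ContinuousLinearMap.adjoint L (ξ j) with hx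
    have hxnorm : ‖x‖ ≤ 1 := by
      calc ‖x‖ ≤ ‖ContinuousLinearMap.adjoint L‖ * ‖ξ j‖ :=
        (ContinuousLinearMap.adjoint L).le_opNorm _
      _ = ‖L‖ * 1 := by
          rw [LinearIsometryEquiv.norm_map ContinuousLinearMap.adjoint L, hON.1 j]
      _ ≤ 1 := by simpa using hL
    have hs : HasSum (fun k => ⟪x, e k⟫_ℂ * ⟪e k, x⟫_ℂ) ⟪x, x⟫_ℂ :=
      e.hasSum_inner_mul_inner x x
    have hs2 : HasSum (fun k => ‖⟪x, e k⟫_ℂ‖ ^ 2) (‖x‖ ^ 2) := by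
      have h' := hs.mapL Complex.reCLM
      have heq : ∀ k, Complex.reCLM (⟪x, e k⟫_ℂ * ⟪e k, x⟫_ℂ) = ‖⟪x, e k⟫_ℂ‖ ^ 2 := by
        intro k
        rw [← inner_conj_symm (e k) x, Complex.mul_conj]
        simp only [Complex.reCLM_apply, Complex.normSq_eq_norm_sq, Complex.ofReal_re]
      have heq2 : Complex.reCLM ⟪x, x⟫_ℂ = ‖x‖ ^ 2 := by
        simpa using inner_self_eq_norm_sq (𝕜 := ℂ) x
      rw [← heq2]
      exact h'.congr_fun fun k => (heq k).symm
    have hle : ∑ k ∈ Finset.range n, ‖⟪x, e k⟫_ℂ‖ ^ 2 ≤ ‖x‖ ^ 2 :=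
      sum_le_hasSum _ (fun k _ => sq_nonneg _) hs2
    have hcx : ∀ k, c j k = ‖⟪x, e k⟫_ℂ‖ ^ 2 := by
      intro k
      rw [hc]
      simp only [hx, ContinuousLinearMap.adjoint_inner_left]
    calc ∑ k ∈ Finset.range n, c j k = ∑ k ∈ Finset.range n, ‖⟪x, e k⟫_ℂ‖ ^ 2 := by
          simp [hcx]
    _ ≤ ‖x‖ ^ 2 := hle
    _ ≤ 1 := by nlinarith [norm_nonneg x]
  -- the row sums t
  set t : ℕ → ℝ := fun j => ∑ k ∈ Finset.range n, c j k with ht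
  have ht0 : ∀ j, 0 ≤ t j := fun j => Finset.sum_nonneg fun k _ => hc0 j k
  have htsummable : Summable t :=
    summable_sum fun k _ => hbes (L (e k))
  have httsum : ∑' j, t j ≤ n := by
    rw [ht, Summable.tsum_finsetSum (fun k _ => hbes (L (e k)))]
    calc ∑ k ∈ Finset.range n, ∑' j, c j k ≤ ∑ k ∈ Finset.range n, (1 : ℝ) := by
          apply Finset.sum_le_sum
          intro k _
          calc ∑' j, c j k ≤ ‖L (e k)‖ ^ 2 := hON.tsum_inner_products_le (L (e k))
          _ ≤ 1 := by nlinarith [hLx (e k), norm_nonneg (L (e k)), norm_nonneg (e k),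
              e.orthonormal.1 k]
    _ = n := by simp
  -- swap sums
  have hswap : ∑ k ∈ Finset.range n, p k = ∑' j, lam j * t j := by
    calc ∑ k ∈ Finset.range n, p k = ∑ k ∈ Finset.range n, ∑' j, lam j * c j k := by
          simp only [hpk]
    _ = ∑' j, ∑ k ∈ Finset.range n, lam j * c j k :=
        (Summable.tsum_finsetSum (fun k _ => hmulsummable k)).symm
    _ = ∑' j, lam j * t j := by
        congr 1; funext j; rw [ht, Finset.mul_sum]
  have hlamtsummable : Summable fun j => lam j * t j := by
    refine Summable.of_nonneg_of_le (fun j => mul_nonneg (h0 j) (ht0 j)) (fun j => ?_)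
      (htsummable.mul_left (lam 0))
    exact mul_le_mul_of_nonneg_right (hlam_bd j) (ht0 j)
  -- pointwise bound
  have hpt : ∀ j, lam j * t j ≤ lam n * t j + (if j < n then lam j - lam n else 0) := by
    intro j
    by_cases hj : j < n
    · simp only [if_pos hj]
      have h1 : (lam j - lam n) * t j ≤ (lam j - lam n) * 1 :=
        mul_le_mul_of_nonneg_left (hB2 j) (sub_nonneg.2 (hmono hj.le))
      nlinarith [ht0 j]
    · simp only [if_neg hj]
      have : lam j ≤ lam n := hmono (le_of_not_gt hj)
      nlinarith [ht0 j]
  have hrhssummable : Summable fun j => lam n * t j + (if j < n then lam j - lam n else 0) := by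
    apply Summable.add (htsummable.mul_left (lam n))
    apply summable_of_ne_finset_zero (s := Finset.range n)
    intro j hj
    simp only [Finset.mem_range] at hj
    simp [Nat.not_lt.2 (Nat.le_of_not_lt hj)]
  calc ∑ k ∈ Finset.range n, p k = ∑' j, lam j * t j := hswap
  _ ≤ ∑' j, (lam n * t j + (if j < n then lam j - lam n else 0)) :=
      Summable.tsum_le_tsum hpt hlamtsummable hrhssummable
  _ = lam n * ∑' j, t j + ∑ j ∈ Finset.range n, (lam j - lam n) := by
      have hind : Summable fun j => (if j < n then lam j - lam n else 0) := by
        apply summable_of_ne_finset_zero (s := Finset.range n)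
        intro j hj
        simp only [Finset.mem_range] at hj
        simp [Nat.not_lt.2 (Nat.le_of_not_lt hj)]
      rw [Summable.tsum_add (htsummable.mul_left (lam n)) hind, tsum_mul_left]
      congr 1
      rw [tsum_eq_sum (s := Finset.range n) (fun j hj => by
        simp only [Finset.mem_range] at hj
        simp [Nat.not_lt.2 (Nat.le_of_not_lt hj)])]
      apply Finset.sum_congr rfl
      intro j hj
      simp [Finset.mem_range.1 hj]
  _ ≤ lam n * n + (∑ j ∈ Finset.range n, lam j - n * lam n) := by
      rw [Finset.sum_sub_distrib]
      simp only [Finset.sum_const, Finset.card_range, nsmul_eq_mul]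
      have hmm : lam n * ∑' j, t j ≤ lam n * n :=
        mul_le_mul_of_nonneg_left httsum (h0 n)
      linarith
  _ = ∑ j ∈ Finset.range n, lam j := by ring
end

section
/- Let p = (p₁, p₂, …) be a sequence of real numbers with 0 ≤ pₖ ≤ 1 for all k, and let m be a positive integer. Then there exists an orthogonal projection P of rank m on ℓ² whose matrix with respect to the standard basis has diagonal (p₁, p₂, …) if and only if p₁ + p₂ + ⋯ = m. -/
open scoped InnerProductSpace ENNReal


/-- Gram-row lemma: if the columns of `M` are orthonormal and row `i1` has norm 1,
then every other row is orthogonal to row `i1`. -/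
lemma gram_row_orth {n m : ℕ} (M : Fin n → Fin m → ℝ)
    (hcol : ∀ j j', ∑ i, M i j * M i j' = if j = j' then (1:ℝ) else 0)
    (i1 : Fin n) (hrow : ∑ j, M i1 j ^ 2 = 1) (i : Fin n) (hi : i ≠ i1) :
    ∑ j, M i j * M i1 j = 0 := by
  classical
  set Q : Fin n → ℝ := fun k => ∑ j, M i1 j * M k j with hQ
  have hQsum : ∑ k, Q k ^ 2 = 1 := by
    have : ∀ k, Q k ^ 2 = ∑ j, ∑ j', (M i1 j * M i1 j') * (M k j * M k j') := by
      intro k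
      rw [sq, hQ]
      rw [Finset.sum_mul_sum]
      exact Finset.sum_congr rfl fun j _ => Finset.sum_congr rfl fun j' _ => by ring
    calc ∑ k, Q k ^ 2 = ∑ k, ∑ j, ∑ j', (M i1 j * M i1 j') * (M k j * M k j') := by
          exact Finset.sum_congr rfl fun k _ => this k
      _ = ∑ j, ∑ j', (M i1 j * M i1 j') * ∑ k, (M k j * M k j') := by
          rw [Finset.sum_comm]
          refine Finset.sum_congr rfl fun j _ => ?_
          rw [Finset.sum_comm]
          refine Finset.sum_congr rfl fun j' _ => ?_
          rw [Finset.mul_sum]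
      _ = ∑ j, (M i1 j * M i1 j) * 1 := by
          refine Finset.sum_congr rfl fun j _ => ?_
          rw [Finset.sum_eq_single j]
          · rw [hcol j j, if_pos rfl]
          · intro j' _ hj'
            rw [hcol j j', if_neg (Ne.symm hj'), mul_zero]
          · intro h; exact absurd (Finset.mem_univ j) h
      _ = 1 := by
          simp only [mul_one, ← sq]
          exact hrow
  have hQ1 : Q i1 = 1 := by
    rw [hQ]
    simpa [sq] using hrow
  have hrest : ∑ k ∈ Finset.univ.erase i1, Q k ^ 2 = 0 := by
    have := Finset.add_sum_erase Finset.univ (fun k => Q k ^ 2) (Finset.mem_univ i1)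
    rw [hQsum, hQ1] at this
    linarith
  have hzero : Q i = 0 := by
    have hnn : ∀ k ∈ Finset.univ.erase i1, (0:ℝ) ≤ Q k ^ 2 := fun k _ => sq_nonneg _
    have := (Finset.sum_eq_zero_iff_of_nonneg hnn).mp hrest i (Finset.mem_erase.mpr ⟨hi, Finset.mem_univ i⟩)
    exact pow_eq_zero_iff (by norm_num) |>.mp this
  rw [hQ] at hzero
  rw [← hzero]
  exact Finset.sum_congr rfl fun j _ => by ring


open scoped Classical in
lemma sum_update2 {n : ℕ} {i0 i1 : Fin n} (h : i0 ≠ i1) (q : Fin n → ℝ) (a b : ℝ) :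
    ∑ i, Function.update (Function.update q i0 a) i1 b i
      = ∑ i, q i - q i0 - q i1 + a + b := by
  rw [Finset.sum_update_of_mem (Finset.mem_univ i1)]
  rw [Finset.sum_update_of_mem (by simp [h] : i0 ∈ Finset.univ \ {i1})]
  have h1 : Finset.univ \ {i1} = Finset.univ.erase i1 := by
    ext x; simp [Finset.mem_erase, eq_comm]
  have h2 : (Finset.univ \ {i1}) \ {i0} = (Finset.univ.erase i1).erase i0 := by
    ext x; simp [Finset.mem_erase, eq_comm, and_comm]
  rw [h2]
  have e1 := Finset.add_sum_erase Finset.univ q (Finset.mem_univ i1)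
  have e2 := Finset.add_sum_erase (Finset.univ.erase i1) q
    (Finset.mem_erase.mpr ⟨h, Finset.mem_univ i0⟩)
  linarith

open scoped Classical in
lemma finite_horn_aux {n : ℕ} (t : ℕ) : ∀ (m : ℕ) (q : Fin n → ℝ),
    (∀ i, 0 ≤ q i ∧ q i ≤ 1) → ∑ i, q i = (m : ℝ) →
    (Finset.univ.filter (fun i => 0 < q i ∧ q i < 1)).card ≤ t →
    ∃ M : Fin n → Fin m → ℝ,
      (∀ j j', ∑ i, M i j * M i j' = if j = j' then (1:ℝ) else 0) ∧
      (∀ i, ∑ j, M i j ^ 2 = q i) := by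
  induction t with
  | zero =>
    intro m q hq hsum hcard
    have hfe : (Finset.univ.filter (fun i => 0 < q i ∧ q i < 1)) = ∅ :=
      Finset.card_eq_zero.mp (Nat.le_zero.mp hcard)
    have h01 : ∀ i, q i = 0 ∨ q i = 1 := by
      intro i
      have hni : i ∉ Finset.univ.filter (fun i => 0 < q i ∧ q i < 1) := by
        rw [hfe]; exact Finset.notMem_empty i
      rw [Finset.mem_filter] at hni
      push_neg at hni
      rcases (hq i).1.lt_or_eq with h | h
      · right
        rcases (hq i).2.lt_or_eq with h' | h'
        · exact absurd (hni (Finset.mem_univ i) h) (not_le.mpr h')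
        · exact h'
      · left; exact h.symm
    set S := Finset.univ.filter (fun i => q i = 1) with hS
    have hqS : ∀ i, q i = if i ∈ S then (1:ℝ) else 0 := by
      intro i
      by_cases h : i ∈ S
      · rw [if_pos h]; exact (Finset.mem_filter.mp h).2
      · rw [if_neg h]
        rcases h01 i with h0 | h1
        · exact h0
        · exact absurd (Finset.mem_filter.mpr ⟨Finset.mem_univ i, h1⟩) h
    have hm : S.card = m := by
      have : ∑ i, q i = (S.card : ℝ) := by
        rw [Finset.sum_congr rfl fun i _ => hqS i]
        rw [Finset.sum_ite_mem]
        simp [Finset.univ_inter]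
      rw [hsum] at this
      exact_mod_cast this.symm
    let σ : Fin m ≃ ↥S := (S.equivFin.trans (finCongr hm)).symm
    refine ⟨fun i j => if ((σ j : ↥S) : Fin n) = i then 1 else 0, ?_, ?_⟩
    · intro j j'
      have hterm : ∀ i : Fin n,
          (if ((σ j : ↥S) : Fin n) = i then (1:ℝ) else 0) *
            (if ((σ j' : ↥S) : Fin n) = i then 1 else 0)
          = if ((σ j : ↥S) : Fin n) = i
              then (if ((σ j' : ↥S) : Fin n) = i then (1:ℝ) else 0) else 0 := by
        intro i; split_ifs <;> ring
      rw [Finset.sum_congr rfl fun i _ => hterm i, Finset.sum_ite_eq]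
      simp only [Finset.mem_univ, if_true]
      have hiff : (((σ j' : ↥S) : Fin n) = ((σ j : ↥S) : Fin n)) ↔ j = j' := by
        rw [Subtype.coe_inj, Equiv.apply_eq_iff_eq, eq_comm]
      by_cases h : j = j'
      · rw [if_pos (hiff.mpr h), if_pos h]
      · rw [if_neg (fun hc => h (hiff.mp hc)), if_neg h]
    · intro i
      have hsq : ∀ j, (if ((σ j : ↥S) : Fin n) = i then (1:ℝ) else 0) ^ 2
          = if ((σ j : ↥S) : Fin n) = i then (1:ℝ) else 0 := by
        intro j; split_ifs <;> norm_num
      rw [Finset.sum_congr rfl fun j _ => hsq j]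
      rcases h01 i with h0 | h1
      · rw [h0]
        apply Finset.sum_eq_zero
        intro j _
        rw [if_neg]
        intro hc
        have h1' : q (((σ j : ↥S) : Fin n)) = 1 := (Finset.mem_filter.mp (σ j).2).2
        rw [hc, h0] at h1'; norm_num at h1'
      · have hiS : i ∈ S := Finset.mem_filter.mpr ⟨Finset.mem_univ i, h1⟩
        rw [h1, Finset.sum_eq_single (σ.symm ⟨i, hiS⟩)]
        · rw [if_pos]
          rw [Equiv.apply_symm_apply]
        · intro j _ hj
          rw [if_neg]
          intro hc
          apply hj
          have : σ j = ⟨i, hiS⟩ := Subtype.ext hc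
          rw [← this, Equiv.symm_apply_apply]
        · intro h; exact absurd (Finset.mem_univ _) h
  | succ t ih =>
    intro m q hq hsum hcard
    by_cases hle : (Finset.univ.filter (fun i => 0 < q i ∧ q i < 1)).card ≤ t
    · exact ih m q hq hsum hle
    push_neg at hle
    have hcardeq : (Finset.univ.filter (fun i => 0 < q i ∧ q i < 1)).card = t + 1 :=
      le_antisymm hcard hle
    have hne : (Finset.univ.filter (fun i => 0 < q i ∧ q i < 1)).Nonempty :=
      Finset.card_pos.mp (by omega)
    obtain ⟨i0, hi0mem⟩ := hne
    have hfrac0 : 0 < q i0 ∧ q i0 < 1 := (Finset.mem_filter.mp hi0mem).2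
    have hex : ∃ i1, i1 ≠ i0 ∧ (0 < q i1 ∧ q i1 < 1) := by
      by_contra hcon
      push_neg at hcon
      have h01' : ∀ i, i ≠ i0 → q i = 0 ∨ q i = 1 := by
        intro i hi
        rcases (hq i).1.lt_or_eq with h | h
        · right
          rcases (hq i).2.lt_or_eq with h' | h'
          · exact absurd (hcon i hi h) (not_le.mpr h')
          · exact h'
        · left; exact h.symm
      set S' := (Finset.univ.erase i0).filter (fun i => q i = 1) with hS'
      have hsum' : ∑ i ∈ Finset.univ.erase i0, q i = (S'.card : ℝ) := by
        have : ∀ i ∈ Finset.univ.erase i0, q i = if q i = 1 then (1:ℝ) else 0 := by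
          intro i hi
          rcases h01' i (Finset.mem_erase.mp hi).1 with h0 | h1
          · simp [h0]
          · simp [h1]
        rw [Finset.sum_congr rfl this, Finset.sum_boole]
      have hdecomp := Finset.add_sum_erase Finset.univ q (Finset.mem_univ i0)
      rw [hsum, hsum'] at hdecomp
      by_cases hmc : m ≤ S'.card
      · have : (m : ℝ) ≤ (S'.card : ℝ) := by exact_mod_cast hmc
        linarith [hfrac0.1]
      · push_neg at hmc
        have : (S'.card : ℝ) + 1 ≤ (m : ℝ) := by exact_mod_cast hmc
        linarith [hfrac0.2]
    obtain ⟨i1, hne10, hfrac1⟩ := hex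
    have hne01 : i0 ≠ i1 := hne10.symm
    have hi1mem : i1 ∈ Finset.univ.filter (fun i => 0 < q i ∧ q i < 1) :=
      Finset.mem_filter.mpr ⟨Finset.mem_univ i1, hfrac1⟩
    have split : ∀ F : Fin n → ℝ,
        ∑ i, F i = F i0 + F i1 + ∑ i ∈ (Finset.univ.erase i0).erase i1, F i := by
      intro F
      rw [← Finset.add_sum_erase _ F (Finset.mem_univ i0),
        ← Finset.add_sum_erase _ F (Finset.mem_erase.mpr ⟨hne10, Finset.mem_univ i1⟩)]
      ring
    by_cases hAB : q i0 + q i1 ≤ 1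
    · -- merge case: (q i0 + q i1, 0)
      set q' := Function.update (Function.update q i0 (q i0 + q i1)) i1 0 with hq'def
      have hq'i0 : q' i0 = q i0 + q i1 := by
        rw [hq'def, Function.update_of_ne hne01, Function.update_self]
      have hq'i1 : q' i1 = 0 := by rw [hq'def, Function.update_self]
      have hq'other : ∀ i, i ≠ i0 → i ≠ i1 → q' i = q i := by
        intro i h0 h1
        rw [hq'def, Function.update_of_ne h1, Function.update_of_ne h0]
      have hq'bounds : ∀ i, 0 ≤ q' i ∧ q' i ≤ 1 := by
        intro i
        by_cases h0 : i = i0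
        · subst h0; rw [hq'i0]; exact ⟨by linarith [hfrac0.1, hfrac1.1], hAB⟩
        by_cases h1 : i = i1
        · subst h1; rw [hq'i1]; norm_num
        · rw [hq'other i h0 h1]; exact hq i
      have hq'sum : ∑ i, q' i = (m : ℝ) := by
        rw [hq'def, sum_update2 hne01, hsum]; ring
      have hq'card : (Finset.univ.filter (fun i => 0 < q' i ∧ q' i < 1)).card ≤ t := by
        have hsub : (Finset.univ.filter (fun i => 0 < q' i ∧ q' i < 1)) ⊆
            (Finset.univ.filter (fun i => 0 < q i ∧ q i < 1)).erase i1 := by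
          intro i hi
          rw [Finset.mem_filter] at hi
          have hi1 : i ≠ i1 := by
            intro hc; subst hc; rw [hq'i1] at hi; exact lt_irrefl 0 hi.2.1
          rw [Finset.mem_erase]
          refine ⟨hi1, Finset.mem_filter.mpr ⟨Finset.mem_univ i, ?_⟩⟩
          by_cases h0 : i = i0
          · subst h0; exact hfrac0
          · rw [hq'other i h0 hi1] at hi; exact hi.2
        calc _ ≤ ((Finset.univ.filter (fun i => 0 < q i ∧ q i < 1)).erase i1).card :=
              Finset.card_le_card hsub
          _ = t := by rw [Finset.card_erase_of_mem hi1mem, hcardeq]; omega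
      obtain ⟨M', hcol', hrow'⟩ := ih m q' hq'bounds hq'sum hq'card
      have hrow1 : ∀ j, M' i1 j = 0 := by
        intro j
        have h0 : ∑ j, M' i1 j ^ 2 = 0 := by rw [hrow' i1, hq'i1]
        have := (Finset.sum_eq_zero_iff_of_nonneg (fun j _ => sq_nonneg (M' i1 j))).mp h0
          j (Finset.mem_univ j)
        exact pow_eq_zero_iff two_ne_zero |>.mp this
      have hs2pos : (0:ℝ) < q i0 + q i1 := by linarith [hfrac0.1, hfrac1.1]
      set c := Real.sqrt (q i0 / (q i0 + q i1)) with hc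
      set s := Real.sqrt (q i1 / (q i0 + q i1)) with hs
      have hc2 : c ^ 2 = q i0 / (q i0 + q i1) :=
        Real.sq_sqrt (div_nonneg hfrac0.1.le hs2pos.le)
      have hs2 : s ^ 2 = q i1 / (q i0 + q i1) :=
        Real.sq_sqrt (div_nonneg hfrac1.1.le hs2pos.le)
      have hcs : c ^ 2 + s ^ 2 = 1 := by
        rw [hc2, hs2, ← add_div, div_self hs2pos.ne']
      set M1 : Fin n → Fin m → ℝ := fun i j => if i = i0 then c * M' i0 j
        else if i = i1 then s * M' i0 j else M' i j with hM1
      have hMa : ∀ j, M1 i0 j = c * M' i0 j := by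
        intro j; simp [hM1]
      have hMb : ∀ j, M1 i1 j = s * M' i0 j := by
        intro j; simp [hM1, hne10]
      have hMc : ∀ i, i ≠ i0 → i ≠ i1 → ∀ j, M1 i j = M' i j := by
        intro i h0 h1 j; simp [hM1, h0, h1]
      refine ⟨M1, ?_, ?_⟩
      · intro j j'
        have hthis := hcol' j j'
        rw [split] at hthis ⊢
        rw [hMa j, hMa j', hMb j, hMb j']
        have hrest : ∑ i ∈ (Finset.univ.erase i0).erase i1, M1 i j * M1 i j'
            = ∑ i ∈ (Finset.univ.erase i0).erase i1, M' i j * M' i j' := by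
          refine Finset.sum_congr rfl fun i hi => ?_
          rw [Finset.mem_erase, Finset.mem_erase] at hi
          rw [hMc i hi.2.1 hi.1 j, hMc i hi.2.1 hi.1 j']
        rw [hrest]
        linear_combination hthis + (M' i0 j * M' i0 j') * hcs - M' i1 j' * hrow1 j
      · intro i
        by_cases h0 : i = i0
        · subst h0
          rw [Finset.sum_congr rfl fun j _ => by rw [hMa j]]
          have hc' : ∀ j, (c * M' i j) ^ 2 = c ^ 2 * M' i j ^ 2 := fun j => by ring
          rw [Finset.sum_congr rfl fun j _ => hc' j, ← Finset.mul_sum, hrow' i, hq'i0,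
            hc2, div_mul_cancel₀ _ hs2pos.ne']
        by_cases h1 : i = i1
        · subst h1
          rw [Finset.sum_congr rfl fun j _ => by rw [hMb j]]
          have hs' : ∀ j, (s * M' i0 j) ^ 2 = s ^ 2 * M' i0 j ^ 2 := fun j => by ring
          rw [Finset.sum_congr rfl fun j _ => hs' j, ← Finset.mul_sum, hrow' i0, hq'i0,
            hs2, div_mul_cancel₀ _ hs2pos.ne']
        · rw [Finset.sum_congr rfl fun j _ => by rw [hMc i h0 h1 j]]
          rw [hrow' i, hq'other i h0 h1]
    · -- merge case: (q i0 + q i1 - 1, 1)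
      push_neg at hAB
      set q' := Function.update (Function.update q i0 (q i0 + q i1 - 1)) i1 1 with hq'def
      have hq'i0 : q' i0 = q i0 + q i1 - 1 := by
        rw [hq'def, Function.update_of_ne hne01, Function.update_self]
      have hq'i1 : q' i1 = 1 := by rw [hq'def, Function.update_self]
      have hq'other : ∀ i, i ≠ i0 → i ≠ i1 → q' i = q i := by
        intro i h0 h1
        rw [hq'def, Function.update_of_ne h1, Function.update_of_ne h0]
      have hq'bounds : ∀ i, 0 ≤ q' i ∧ q' i ≤ 1 := by
        intro i
        by_cases h0 : i = i0
        · subst h0; rw [hq'i0]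
          constructor
          · linarith
          · linarith [hfrac0.2, hfrac1.2]
        by_cases h1 : i = i1
        · subst h1; rw [hq'i1]; norm_num
        · rw [hq'other i h0 h1]; exact hq i
      have hq'sum : ∑ i, q' i = (m : ℝ) := by
        rw [hq'def, sum_update2 hne01, hsum]; ring
      have hq'card : (Finset.univ.filter (fun i => 0 < q' i ∧ q' i < 1)).card ≤ t := by
        have hsub : (Finset.univ.filter (fun i => 0 < q' i ∧ q' i < 1)) ⊆
            (Finset.univ.filter (fun i => 0 < q i ∧ q i < 1)).erase i1 := by
          intro i hi
          rw [Finset.mem_filter] at hi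
          have hi1 : i ≠ i1 := by
            intro hc; subst hc; rw [hq'i1] at hi; exact lt_irrefl 1 hi.2.2
          rw [Finset.mem_erase]
          refine ⟨hi1, Finset.mem_filter.mpr ⟨Finset.mem_univ i, ?_⟩⟩
          by_cases h0 : i = i0
          · subst h0; exact hfrac0
          · rw [hq'other i h0 hi1] at hi; exact hi.2
        calc _ ≤ ((Finset.univ.filter (fun i => 0 < q i ∧ q i < 1)).erase i1).card :=
              Finset.card_le_card hsub
          _ = t := by rw [Finset.card_erase_of_mem hi1mem, hcardeq]; omega
      obtain ⟨M', hcol', hrow'⟩ := ih m q' hq'bounds hq'sum hq'card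
      have hrow1 : ∑ j, M' i1 j ^ 2 = 1 := by rw [hrow' i1, hq'i1]
      have horth : ∑ j, M' i0 j * M' i1 j = 0 :=
        gram_row_orth M' hcol' i1 hrow1 i0 hne01
      have hDpos : (0:ℝ) < 2 - q i0 - q i1 := by linarith [hfrac0.2, hfrac1.2]
      set c := Real.sqrt ((1 - q i0) / (2 - q i0 - q i1)) with hc
      set s := Real.sqrt ((1 - q i1) / (2 - q i0 - q i1)) with hs
      have hc2 : c ^ 2 = (1 - q i0) / (2 - q i0 - q i1) :=
        Real.sq_sqrt (div_nonneg (by linarith [hfrac0.2]) hDpos.le)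
      have hs2 : s ^ 2 = (1 - q i1) / (2 - q i0 - q i1) :=
        Real.sq_sqrt (div_nonneg (by linarith [hfrac1.2]) hDpos.le)
      have hcs : c ^ 2 + s ^ 2 = 1 := by
        rw [hc2, hs2, ← add_div]
        rw [show (1 - q i0) + (1 - q i1) = 2 - q i0 - q i1 by ring, div_self hDpos.ne']
      set M1 : Fin n → Fin m → ℝ := fun i j => if i = i0 then c * M' i0 j + s * M' i1 j
        else if i = i1 then -s * M' i0 j + c * M' i1 j else M' i j with hM1
      have hMa : ∀ j, M1 i0 j = c * M' i0 j + s * M' i1 j := by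
        intro j; simp [hM1]
      have hMb : ∀ j, M1 i1 j = -s * M' i0 j + c * M' i1 j := by
        intro j; simp [hM1, hne10]
      have hMc : ∀ i, i ≠ i0 → i ≠ i1 → ∀ j, M1 i j = M' i j := by
        intro i h0 h1 j; simp [hM1, h0, h1]
      refine ⟨M1, ?_, ?_⟩
      · intro j j'
        have hthis := hcol' j j'
        rw [split] at hthis ⊢
        rw [hMa j, hMa j', hMb j, hMb j']
        have hrest : ∑ i ∈ (Finset.univ.erase i0).erase i1, M1 i j * M1 i j'
            = ∑ i ∈ (Finset.univ.erase i0).erase i1, M' i j * M' i j' := by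
          refine Finset.sum_congr rfl fun i hi => ?_
          rw [Finset.mem_erase, Finset.mem_erase] at hi
          rw [hMc i hi.2.1 hi.1 j, hMc i hi.2.1 hi.1 j']
        rw [hrest]
        linear_combination hthis + (M' i0 j * M' i0 j' + M' i1 j * M' i1 j') * hcs
      · intro i
        by_cases h0 : i = i0
        · subst h0
          rw [Finset.sum_congr rfl fun j _ => by rw [hMa j]]
          have hexp : ∀ j, (c * M' i j + s * M' i1 j) ^ 2
              = c ^ 2 * M' i j ^ 2 + (2 * c * s) * (M' i j * M' i1 j)
                + s ^ 2 * M' i1 j ^ 2 := fun j => by ring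
          rw [Finset.sum_congr rfl fun j _ => hexp j]
          rw [Finset.sum_add_distrib, Finset.sum_add_distrib, ← Finset.mul_sum,
            ← Finset.mul_sum, ← Finset.mul_sum, hrow' i, horth, hrow1, hq'i0, hc2, hs2]
          field_simp
          ring
        by_cases h1 : i = i1
        · subst h1
          rw [Finset.sum_congr rfl fun j _ => by rw [hMb j]]
          have hexp : ∀ j, (-s * M' i0 j + c * M' i j) ^ 2
              = s ^ 2 * M' i0 j ^ 2 - (2 * c * s) * (M' i0 j * M' i j)
                + c ^ 2 * M' i j ^ 2 := fun j => by ring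
          rw [Finset.sum_congr rfl fun j _ => hexp j]
          rw [Finset.sum_add_distrib, Finset.sum_sub_distrib, ← Finset.mul_sum,
            ← Finset.mul_sum, ← Finset.mul_sum, hrow' i0, horth, hrow1, hq'i0, hc2, hs2]
          field_simp
          ring
        · rw [Finset.sum_congr rfl fun j _ => by rw [hMc i h0 h1 j]]
          rw [hrow' i, hq'other i h0 h1]

open scoped Classical in
lemma finite_horn {n : ℕ} (m : ℕ) (q : Fin n → ℝ)
    (hq : ∀ i, 0 ≤ q i ∧ q i ≤ 1) (hsum : ∑ i, q i = (m : ℝ)) :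
    ∃ M : Fin n → Fin m → ℝ,
      (∀ j j', ∑ i, M i j * M i j' = if j = j' then (1:ℝ) else 0) ∧
      (∀ i, ∑ j, M i j ^ 2 = q i) :=
  finite_horn_aux (Finset.univ.filter (fun i => 0 < q i ∧ q i < 1)).card m q hq hsum le_rfl


/-- A sequence `p` with `0 ≤ p k ≤ 1` is the diagonal, with respect to an
orthonormal basis `u` of a separable Hilbert space, of a rank-`m` orthogonal
projection if and only if `∑ p k = m`. -/
theorem diagonal_of_rank_m_projection {H : Type*} [NormedAddCommGroup H]
    [InnerProductSpace ℂ H] [CompleteSpace H]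
    (u : HilbertBasis ℕ ℂ H)
    (p : ℕ → ℝ) (hp : ∀ k, 0 ≤ p k ∧ p k ≤ 1) (m : ℕ) (hm : 0 < m) :
    (∃ P : H →L[ℂ] H, IsIdempotentElem P ∧ IsSelfAdjoint P ∧
        FiniteDimensional ℂ (LinearMap.range (P : H →ₗ[ℂ] H)) ∧
        Module.finrank ℂ (LinearMap.range (P : H →ₗ[ℂ] H)) = m ∧
        ∀ k, ⟪u k, P (u k)⟫_ℂ = (p k : ℂ)) ↔
      ∑' k, p k = (m : ℝ) := by
  constructor
  · rintro ⟨P, hidem, hsa, hfd, hrank, hdiag⟩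
    classical
    set V := LinearMap.range (P : H →ₗ[ℂ] H) with hV
    have hsym : ∀ x y : H, ⟪P x, y⟫_ℂ = ⟪x, P y⟫_ℂ :=
      ContinuousLinearMap.isSelfAdjoint_iff_isSymmetric.mp hsa
    have hfix : ∀ v : H, v ∈ V → P v = v := by
      rintro v ⟨w, rfl⟩
      have := congrArg (fun T : H →L[ℂ] H => T w) hidem
      simpa [ContinuousLinearMap.mul_apply] using this
    let e : OrthonormalBasis (Fin m) ℂ V :=
      ((stdOrthonormalBasis ℂ V).reindex (finCongr hrank))
    have key : ∀ k, p k = ∑ j, ‖⟪((e j : V) : H), u k⟫_ℂ‖ ^ 2 := by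
      intro k
      have hw : P (u k) ∈ V := ⟨u k, rfl⟩
      set w : V := ⟨P (u k), hw⟩ with hwdef
      have h1 : (p k : ℂ) = ⟪w, w⟫_ℂ := by
        rw [← hdiag k]
        have hPP : P (u k) = P (P (u k)) := by rw [hfix _ hw]
        calc ⟪u k, P (u k)⟫_ℂ = ⟪u k, P (P (u k))⟫_ℂ := by rw [← hPP]
          _ = ⟪P (u k), P (u k)⟫_ℂ := by rw [← hsym]
          _ = ⟪w, w⟫_ℂ := rfl
      have h2 : ⟪w, w⟫_ℂ = ∑ j, ⟪w, e j⟫_ℂ * ⟪e j, w⟫_ℂ :=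
        (e.sum_inner_mul_inner w w).symm
      have h3 : ∀ j : Fin m, ⟪e j, w⟫_ℂ = ⟪((e j : V) : H), u k⟫_ℂ := by
        intro j
        have h0 : ⟪e j, w⟫_ℂ = ⟪((e j : V) : H), P (u k)⟫_ℂ := rfl
        rw [h0, ← hsym, hfix _ (e j).2]
      have h4 : (p k : ℂ) = ((∑ j, ‖⟪((e j : V) : H), u k⟫_ℂ‖ ^ 2 : ℝ) : ℂ) := by
        rw [h1, h2]
        push_cast
        refine Finset.sum_congr rfl fun j _ => ?_
        rw [← inner_conj_symm (e j) w, RCLike.mul_conj]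
        have hn : ‖⟪w, e j⟫_ℂ‖ = ‖⟪((e j : V) : H), u k⟫_ℂ‖ := by
          rw [← h3 j, norm_inner_symm]
        rw [hn]
        norm_num
      exact_mod_cast h4
    have hasum : ∀ j : Fin m, HasSum (fun k => ‖⟪((e j : V) : H), u k⟫_ℂ‖ ^ 2) 1 := by
      intro j
      have h := u.hasSum_inner_mul_inner ((e j : V) : H) ((e j : V) : H)
      have heq : (fun k => ⟪((e j : V) : H), u k⟫_ℂ * ⟪u k, ((e j : V) : H)⟫_ℂ)
          = fun k => ((‖⟪((e j : V) : H), u k⟫_ℂ‖ ^ 2 : ℝ) : ℂ) := by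
        funext k
        rw [← inner_conj_symm ((e j : V) : H) (u k), RCLike.conj_mul]
        simp only [RCLike.norm_conj]
        rw [norm_inner_symm]
        norm_cast
      rw [heq] at h
      have hnorm : ⟪((e j : V) : H), ((e j : V) : H)⟫_ℂ = ((1 : ℝ) : ℂ) := by
        have h1 : ‖((e j : V) : H)‖ = 1 := by
          rw [Submodule.norm_coe]
          exact e.orthonormal.1 j
        rw [inner_self_eq_norm_sq_to_K, h1]
        norm_num
      rw [hnorm] at h
      exact Complex.hasSum_ofReal.mp h
    have hsum : HasSum (fun k => ∑ j : Fin m, ‖⟪((e j : V) : H), u k⟫_ℂ‖ ^ 2) (m : ℝ) := by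
      have := hasSum_sum (f := fun (j : Fin m) k => ‖⟪((e j : V) : H), u k⟫_ℂ‖ ^ 2)
        (s := Finset.univ) (a := fun _ => (1:ℝ)) (fun j _ => hasum j)
      simpa using this
    have : HasSum p (m : ℝ) := by
      have hfun : (fun k => ∑ j : Fin m, ‖⟪((e j : V) : H), u k⟫_ℂ‖ ^ 2) = p := by
        funext k; exact (key k).symm
      rwa [hfun] at hsum
    exact this.tsum_eq
  · intro hsum
    classical
    -- p is summable
    have hsummable : Summable p := by
      by_contra hns
      rw [tsum_eq_zero_of_not_summable hns] at hsum
      exact hm.ne' (by exact_mod_cast hsum.symm)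
    -- choose N with tail sum at most 1
    obtain ⟨N, hN⟩ : ∃ N, (m : ℝ) - 1 < ∑ i ∈ Finset.range N, p i := by
      have ht := hsummable.hasSum.tendsto_sum_nat
      rw [hsum] at ht
      have := ht.eventually_const_lt (show (m:ℝ) - 1 < m by linarith)
      exact this.exists
    set σ := ∑' k, p (k + N) with hσdef
    have hsumm' : Summable fun k => p (k + N) := (summable_nat_add_iff N).mpr hsummable
    have hσsplit : ∑ i ∈ Finset.range N, p i + σ = (m : ℝ) := by
      rw [hσdef, hsummable.sum_add_tsum_nat_add N, hsum]
    have hσnonneg : 0 ≤ σ := tsum_nonneg fun k => (hp _).1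
    have hσle : σ ≤ 1 := by linarith
    have hple : ∀ k, N ≤ k → p k ≤ σ := by
      intro k hk
      have := hsumm'.le_tsum (k - N) fun i _ => (hp _).1
      rwa [Nat.sub_add_cancel hk] at this
    -- finite diagonal data
    set q : Fin (N + 1) → ℝ := fun i => if h : (i : ℕ) < N then p i else σ with hqdef
    have hqb : ∀ i, 0 ≤ q i ∧ q i ≤ 1 := by
      intro i
      by_cases h : (i : ℕ) < N
      · simp only [hqdef, dif_pos h]; exact hp i
      · simp only [hqdef, dif_neg h]; exact ⟨hσnonneg, hσle⟩
    have hqsum : ∑ i, q i = (m : ℝ) := by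
      rw [Fin.sum_univ_castSucc]
      have h1 : ∀ i : Fin N, q i.castSucc = p i := by
        intro i
        simp only [hqdef, Fin.coe_castSucc, dif_pos i.isLt]
      have h2 : q (Fin.last N) = σ := by
        simp only [hqdef, Fin.val_last, dif_neg (lt_irrefl N)]
      rw [Finset.sum_congr rfl fun i _ => h1 i, h2,
        Fin.sum_univ_eq_sum_range (fun i => p i) N, hσsplit]
    obtain ⟨M, hcol, hrow⟩ := finite_horn m q hqb hqsum
    have hMlast : σ = 0 → ∀ j, M (Fin.last N) j = 0 := by
      intro h0 j
      have hr : ∑ j, M (Fin.last N) j ^ 2 = 0 := by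
        rw [hrow (Fin.last N)]
        simp only [hqdef, Fin.val_last, dif_neg (lt_irrefl N)]
        exact h0
      have := (Finset.sum_eq_zero_iff_of_nonneg fun j _ => sq_nonneg _).mp hr j (Finset.mem_univ j)
      exact pow_eq_zero_iff two_ne_zero |>.mp this
    -- coefficient sequences
    set d : Fin m → ℕ → ℝ := fun j k =>
      if h : k < N then M ⟨k, h.trans (Nat.lt_succ_self N)⟩ j
      else Real.sqrt (p k / σ) * M (Fin.last N) j with hddef
    have hd_lt : ∀ j k (h : k < N), d j k = M ⟨k, h.trans (Nat.lt_succ_self N)⟩ j := by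
      intro j k h; simp only [hddef, dif_pos h]
    have hd_ge : ∀ j k, N ≤ k → d j k = Real.sqrt (p k / σ) * M (Fin.last N) j := by
      intro j k h; simp only [hddef, dif_neg (not_lt.mpr h)]
    -- key: products of coefficient sequences sum correctly
    have keyA : ∀ j j', HasSum (fun k => d j k * d j' k) (if j = j' then (1:ℝ) else 0) := by
      intro j j'
      have htailterm : ∀ k, d j (k + N) * d j' (k + N)
          = p (k + N) / σ * (M (Fin.last N) j * M (Fin.last N) j') := by
        intro k
        rw [hd_ge j _ (Nat.le_add_left N k), hd_ge j' _ (Nat.le_add_left N k)]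
        have : Real.sqrt (p (k + N) / σ) * Real.sqrt (p (k + N) / σ) = p (k + N) / σ :=
          Real.mul_self_sqrt (div_nonneg (hp _).1 hσnonneg)
        calc _ = (Real.sqrt (p (k + N) / σ) * Real.sqrt (p (k + N) / σ)) *
              (M (Fin.last N) j * M (Fin.last N) j') := by ring
          _ = _ := by rw [this]
      have htail : HasSum (fun k => d j (k + N) * d j' (k + N))
          (M (Fin.last N) j * M (Fin.last N) j') := by
        rcases eq_or_lt_of_le hσnonneg with h0 | hpos
        · have hz : ∀ k, d j (k + N) * d j' (k + N) = 0 := by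
            intro k
            rw [htailterm k, hMlast h0.symm j]
            ring
          have : M (Fin.last N) j * M (Fin.last N) j' = 0 := by
            rw [hMlast h0.symm j]; ring
          rw [this]
          exact (hasSum_zero).congr_fun fun k => hz k
        · have h1 : HasSum (fun k => p (k + N) / σ) 1 := by
            have := hsumm'.hasSum.div_const σ
            rw [← hσdef, div_self hpos.ne'] at this
            exact this
          have := h1.mul_right (M (Fin.last N) j * M (Fin.last N) j')
          rw [one_mul] at this
          exact this.congr_fun fun k => htailterm k
      have hfull : HasSum (fun k => d j k * d j' k)
          (M (Fin.last N) j * M (Fin.last N) j'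
            + ∑ i ∈ Finset.range N, d j i * d j' i) :=
        (hasSum_nat_add_iff N).mp htail
      have hrangesum : M (Fin.last N) j * M (Fin.last N) j'
          + ∑ i ∈ Finset.range N, d j i * d j' i = if j = j' then (1:ℝ) else 0 := by
        have hone : ∀ i : Fin N, d j i * d j' i
            = M i.castSucc j * M i.castSucc j' := by
          intro i
          rw [hd_lt j i i.isLt, hd_lt j' i i.isLt]
          congr 1
        have : ∑ i ∈ Finset.range N, d j i * d j' i
            = ∑ i : Fin N, M i.castSucc j * M i.castSucc j' := by
          rw [← Fin.sum_univ_eq_sum_range (fun i => d j i * d j' i) N]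
          exact Finset.sum_congr rfl fun i _ => hone i
        rw [this, ← hcol j j', Fin.sum_univ_castSucc]
        ring
      rwa [hrangesum] at hfull
    have keyB : ∀ k, ∑ j, d j k ^ 2 = p k := by
      intro k
      by_cases h : k < N
      · rw [Finset.sum_congr rfl fun j _ => by rw [hd_lt j k h]]
        rw [hrow ⟨k, h.trans (Nat.lt_succ_self N)⟩]
        simp only [hqdef, dif_pos h]
      · push_neg at h
        rw [Finset.sum_congr rfl fun j _ => by rw [hd_ge j k h]]
        have hexp : ∀ j, (Real.sqrt (p k / σ) * M (Fin.last N) j) ^ 2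
            = p k / σ * M (Fin.last N) j ^ 2 := by
          intro j
          rw [mul_pow, Real.sq_sqrt (div_nonneg (hp _).1 hσnonneg)]
        rw [Finset.sum_congr rfl fun j _ => hexp j, ← Finset.mul_sum, hrow (Fin.last N)]
        have hqlast : q (Fin.last N) = σ := by
          simp only [hqdef, Fin.val_last, dif_neg (lt_irrefl N)]
        rw [hqlast]
        rcases eq_or_lt_of_le hσnonneg with h0 | hpos
        · have hpk : p k = 0 := le_antisymm (by rw [← h0] at hple; exact hple k h) (hp k).1
          rw [hpk, ← h0]
          ring
        · exact div_mul_cancel₀ _ hpos.ne'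
    -- build lp elements and vectors
    have hmem : ∀ j, Memℓp (fun k => ((d j k : ℝ) : ℂ)) 2 := by
      intro j
      apply memℓp_gen
      have heq : (fun k => ‖((d j k : ℝ) : ℂ)‖ ^ (2 : ℝ≥0∞).toReal)
          = fun k => d j k * d j k := by
        funext k
        rw [show ((2 : ℝ≥0∞)).toReal = ((2 : ℕ) : ℝ) by norm_num, Real.rpow_natCast,
          Complex.norm_real, Real.norm_eq_abs, sq_abs, sq]
      rw [heq]
      exact (keyA j j).summable
    set e : Fin m → lp (fun _ : ℕ => ℂ) 2 := fun j => ⟨fun k => ((d j k : ℝ) : ℂ), hmem j⟩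
      with hedef
    have he_apply : ∀ j k, (e j : ℕ → ℂ) k = ((d j k : ℝ) : ℂ) := fun j k => rfl
    set f : Fin m → H := fun j => u.repr.symm (e j) with hfdef
    have hinner_e : ∀ j j', ⟪e j, e j'⟫_ℂ = ((if j = j' then (1:ℝ) else 0 : ℝ) : ℂ) := by
      intro j j'
      have hs : HasSum (fun k => ⟪(e j : ℕ → ℂ) k, (e j' : ℕ → ℂ) k⟫_ℂ)
          (((if j = j' then (1:ℝ) else 0 : ℝ) : ℂ)) := by
        have hc : ∀ k, ⟪(e j : ℕ → ℂ) k, (e j' : ℕ → ℂ) k⟫_ℂ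
            = (((d j k * d j' k : ℝ)) : ℂ) := by
          intro k
          rw [he_apply, he_apply]
          simp only [RCLike.inner_apply, Complex.conj_ofReal]
          push_cast
          ring
        rw [show (fun k => ⟪(e j : ℕ → ℂ) k, (e j' : ℕ → ℂ) k⟫_ℂ)
            = fun k => (((d j k * d j' k : ℝ)) : ℂ) from funext hc]
        exact Complex.hasSum_ofReal.mpr (keyA j j')
      exact (lp.hasSum_inner (e j) (e j')).unique hs
    have hinner_f : ∀ j j', ⟪f j, f j'⟫_ℂ = ((if j = j' then (1:ℝ) else 0 : ℝ) : ℂ) := by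
      intro j j'
      rw [hfdef]
      simp only
      rw [LinearIsometryEquiv.inner_map_map]
      exact hinner_e j j'
    have honf : Orthonormal ℂ f := by
      rw [orthonormal_iff_ite]
      intro j j'
      rw [hinner_f j j']
      split_ifs <;> norm_num
    have hinner_basis : ∀ k j, ⟪u k, f j⟫_ℂ = ((d j k : ℝ) : ℂ) := by
      intro k j
      rw [← u.repr_apply_apply]
      rw [hfdef]
      simp only [LinearIsometryEquiv.apply_symm_apply]
      exact he_apply j k
    set P : H →L[ℂ] H := ∑ j : Fin m, (innerSL ℂ (f j)).smulRight (f j) with hPdef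
    have hPapply : ∀ x, P x = ∑ j, ⟪f j, x⟫_ℂ • f j := by
      intro x
      rw [hPdef]
      simp [ContinuousLinearMap.sum_apply]
    have hPf : ∀ j, P (f j) = f j := by
      intro j
      rw [hPapply]
      rw [Finset.sum_eq_single j]
      · rw [hinner_f j j, if_pos rfl]; norm_num
      · intro j' _ hj'
        rw [hinner_f j' j, if_neg (by exact fun hc => hj' hc)]
        norm_num
      · intro h; exact absurd (Finset.mem_univ _) h
    have hidem : IsIdempotentElem P := by
      rw [IsIdempotentElem]
      ext x
      rw [ContinuousLinearMap.mul_apply]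
      rw [hPapply x, map_sum]
      rw [Finset.sum_congr rfl fun j _ => by rw [map_smul, hPf j]]
    have hsa : IsSelfAdjoint P := by
      rw [ContinuousLinearMap.isSelfAdjoint_iff_isSymmetric]
      intro x y
      simp only [ContinuousLinearMap.coe_coe]
      rw [hPapply x, hPapply y, sum_inner, inner_sum]
      refine Finset.sum_congr rfl fun j _ => ?_
      rw [inner_smul_left, inner_smul_right, ← inner_conj_symm x (f j)]
      ring
    have hrange : LinearMap.range (P : H →ₗ[ℂ] H) = Submodule.span ℂ (Set.range f) := by
      apply le_antisymm
      · rintro _ ⟨x, rfl⟩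
        rw [ContinuousLinearMap.coe_coe, hPapply x]
        exact Submodule.sum_mem _ fun j _ =>
          Submodule.smul_mem _ _ (Submodule.subset_span ⟨j, rfl⟩)
      · rw [Submodule.span_le]
        rintro _ ⟨j, rfl⟩
        exact ⟨f j, hPf j⟩
    have hfd : FiniteDimensional ℂ (LinearMap.range (P : H →ₗ[ℂ] H)) := by
      rw [hrange]
      exact FiniteDimensional.span_of_finite ℂ (Set.finite_range f)
    have hfinrank : Module.finrank ℂ (LinearMap.range (P : H →ₗ[ℂ] H)) = m := by
      rw [hrange, finrank_span_eq_card honf.linearIndependent]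
      simp
    refine ⟨P, hidem, hsa, hfd, hfinrank, ?_⟩
    intro k
    rw [hPapply (u k), inner_sum]
    have : ∀ j, ⟪u k, ⟪f j, u k⟫_ℂ • f j⟫_ℂ = ((d j k ^ 2 : ℝ) : ℂ) := by
      intro j
      rw [inner_smul_right, ← inner_conj_symm (u k) (f j), RCLike.mul_conj, norm_inner_symm]
      simp only [hinner_basis]
      rw [Complex.norm_real, Real.norm_eq_abs]
      push_cast
      norm_cast
      exact congrArg Complex.ofReal (sq_abs (d j k))
    rw [Finset.sum_congr rfl fun j _ => this j, ← Complex.ofReal_sum, keyB k]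
end

section
/- Every continuous convex function f on a compact interval [a,b] ⊆ ℝ can be uniformly approximated on [a,b] by functions of the form λ ↦ a₀ + b₀λ + ∑ₖ cₖ max(λ − rₖ, 0) where a₀, b₀, rₖ ∈ ℝ and cₖ ≥ 0. -/
/-- Auxiliary: interpolation error bound. -/
lemma approx_aux_angular {A B fx ε h u sj : ℝ} (hh : 0 < h) (hu0 : 0 ≤ u) (huh : u ≤ h)
    (hsj : sj * h = B - A) (hA : |fx - A| ≤ ε) (hB : |fx - B| ≤ ε) :
    |fx - (A + sj * u)| ≤ ε := by
  rw [abs_le] at *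
  constructor
  · nlinarith [mul_nonneg (sub_nonneg.2 huh) (sub_nonneg.2 hA.2),
      mul_nonneg hu0 (sub_nonneg.2 hB.2)]
  · nlinarith [mul_nonneg (sub_nonneg.2 huh) (show (0:ℝ) ≤ fx - A + ε by linarith [hA.1]),
      mul_nonneg hu0 (show (0:ℝ) ≤ fx - B + ε by linarith [hB.1])]

/-- Every continuous convex function on a compact interval `[a,b]` can be uniformly
approximated by functions of the form
`x ↦ a₀ + b₀ * x + ∑ k, c k * max (x - r k) 0` with `c k ≥ 0`. -/
theorem convex_uniform_approx_by_angular (a b : ℝ) (f : ℝ → ℝ)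
    (hf : ContinuousOn f (Set.Icc a b)) (hconv : ConvexOn ℝ (Set.Icc a b) f) :
    ∀ ε > (0 : ℝ), ∃ (N : ℕ) (a₀ b₀ : ℝ) (r : Fin N → ℝ) (c : Fin N → ℝ),
      (∀ k, 0 ≤ c k) ∧
      ∀ x ∈ Set.Icc a b,
        |f x - (a₀ + b₀ * x + ∑ k, c k * max (x - r k) 0)| ≤ ε := by
  intro ε hε
  rcases le_or_gt b a with hba | hab
  · refine ⟨0, f a, 0, Fin.elim0, Fin.elim0, fun k => k.elim0, ?_⟩
    intro x hx
    have hxa : x = a := le_antisymm (hx.2.trans hba) hx.1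
    simp [hxa, hε.le]
  · have huc := isCompact_Icc.uniformContinuousOn_of_continuous hf
    rw [Metric.uniformContinuousOn_iff_le] at huc
    obtain ⟨δ, hδ, hδ'⟩ := huc ε hε
    obtain ⟨N, hN⟩ : ∃ N : ℕ, (b - a) / δ ≤ N + 1 := by
      obtain ⟨N, hN⟩ := exists_nat_ge ((b - a) / δ)
      exact ⟨N, hN.trans (by linarith)⟩
    set h : ℝ := (b - a) / (N + 1) with hhdef
    have hh : 0 < h := div_pos (sub_pos.2 hab) (by positivity)
    have hhδ : h ≤ δ := by
      rw [hhdef, div_le_iff₀ (by positivity)]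
      rw [div_le_iff₀ hδ] at hN
      linarith
    set xp : ℕ → ℝ := fun i => a + i * h with hxpdef
    set s : ℕ → ℝ := fun i => (f (xp (i + 1)) - f (xp i)) / h with hsdef
    have hxp0 : xp 0 = a := by simp [hxpdef]
    have hxpsucc : ∀ i : ℕ, xp (i + 1) = xp i + h := by
      intro i; simp [hxpdef]; push_cast; ring
    have hxpb : xp (N + 1) = b := by
      simp only [hxpdef, hhdef]; push_cast; field_simp; ring
    have hxpmono : ∀ i j : ℕ, i ≤ j → xp i ≤ xp j := by
      intro i j hij
      simp only [hxpdef]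
      have : (i : ℝ) ≤ j := by exact_mod_cast hij
      nlinarith
    have hmem : ∀ i : ℕ, i ≤ N + 1 → xp i ∈ Set.Icc a b := by
      intro i hi
      constructor
      · rw [← hxp0]; exact hxpmono 0 i (Nat.zero_le _)
      · rw [← hxpb]; exact hxpmono i (N + 1) hi
    have hstep : ∀ i : ℕ, s i * h = f (xp (i + 1)) - f (xp i) := by
      intro i; simp only [hsdef]; field_simp
    -- main sum identity
    have hP : ∀ (j : ℕ) (x : ℝ),
        f a + s 0 * (x - a) + ∑ k ∈ Finset.range j, (s (k + 1) - s k) * (x - xp (k + 1))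
          = f (xp j) + s j * (x - xp j) := by
      intro j x
      induction j with
      | zero => simp [hxp0]
      | succ j ih =>
        rw [Finset.sum_range_succ, ← add_assoc, ih]
        have e1 : f (xp (j + 1)) = f (xp j) + s j * h := by
          have := hstep j; linarith
        have e2 : xp (j + 1) = xp j + h := hxpsucc j
        rw [e1, e2]; ring
    refine ⟨N, f a - s 0 * a, s 0, fun k => xp (k + 1), fun k => s (k + 1) - s k, ?_, ?_⟩
    · intro k
      have hm := hconv.slope_mono_adjacent (hmem k (by omega)) (hmem ((k : ℕ) + 2) (by omega))
        (show xp k < xp ((k : ℕ) + 1) by rw [hxpsucc]; linarith)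
        (show xp ((k : ℕ) + 1) < xp ((k : ℕ) + 2) by
          rw [show ((k : ℕ) + 2) = ((k : ℕ) + 1) + 1 from rfl, hxpsucc ((k : ℕ) + 1)]; linarith)
      have d1 : xp ((k : ℕ) + 1) - xp (k : ℕ) = h := by rw [hxpsucc]; ring
      have d2 : xp ((k : ℕ) + 2) - xp ((k : ℕ) + 1) = h := by
        rw [show ((k : ℕ) + 2) = ((k : ℕ) + 1) + 1 from rfl, hxpsucc ((k : ℕ) + 1)]; ring
      rw [d1, d2] at hm
      simp only [hsdef]
      rw [sub_nonneg]
      exact hm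
    · intro x hx
      set j : ℕ := min N ⌊(x - a) / h⌋₊ with hjdef
      have hxa0 : 0 ≤ (x - a) / h := div_nonneg (by linarith [hx.1]) hh.le
      have hjN : j ≤ N := min_le_left _ _
      have hxpj : xp j ≤ x := by
        have h1 : (j : ℝ) ≤ (x - a) / h := by
          have := Nat.floor_le hxa0
          have h2 : (j : ℝ) ≤ ⌊(x - a) / h⌋₊ := by exact_mod_cast min_le_right N _
          linarith
        rw [le_div_iff₀ hh] at h1
        simp only [hxpdef]; linarith
      have hxpj1 : x ≤ xp (j + 1) := by
        rcases le_or_gt (⌊(x - a) / h⌋₊) N with hc | hc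
        · have hj : j = ⌊(x - a) / h⌋₊ := min_eq_right hc
          have := Nat.lt_floor_add_one ((x - a) / h)
          rw [div_lt_iff₀ hh] at this
          simp only [hxpdef]
          rw [hj]; push_cast; push_cast at this; linarith
        · have hj : j = N := min_eq_left hc.le
          rw [hj, hxpb]; exact hx.2
      -- sum evaluation
      have hsum : ∑ k : Fin N, (s (k + 1) - s k) * max (x - xp (k + 1)) 0
          = ∑ k ∈ Finset.range j, (s (k + 1) - s k) * (x - xp (k + 1)) := by
        rw [Fin.sum_univ_eq_sum_range (fun k => (s (k + 1) - s k) * max (x - xp (k + 1)) 0)]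
        rw [← Finset.sum_subset (Finset.range_subset_range.2 hjN)]
        · apply Finset.sum_congr rfl
          intro k hk
          rw [Finset.mem_range] at hk
          have : xp (k + 1) ≤ x := le_trans (hxpmono _ j hk) hxpj
          rw [max_eq_left (by linarith)]
        · intro k _ hk
          rw [Finset.mem_range, not_lt] at hk
          have : x ≤ xp (k + 1) := le_trans hxpj1 (hxpmono _ _ (by omega))
          rw [max_eq_right (by linarith), mul_zero]
      rw [hsum]
      have : f a - s 0 * a + s 0 * x + ∑ k ∈ Finset.range j, (s (k + 1) - s k) * (x - xp (k + 1))
          = f (xp j) + s j * (x - xp j) := by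
        rw [← hP j x]; ring
      rw [this]
      have hmemx : ∀ i ≤ N + 1, dist x (xp i) ≤ δ → |f x - f (xp i)| ≤ ε := by
        intro i hi hd
        have := hδ' x hx (xp i) (hmem i hi) hd
        rwa [Real.dist_eq] at this
      have hd1 : |f x - f (xp j)| ≤ ε := by
        apply hmemx j (by omega)
        rw [Real.dist_eq, abs_le]
        have := hxpsucc j
        constructor <;> linarith
      have hd2 : |f x - f (xp (j + 1))| ≤ ε := by
        apply hmemx (j + 1) (by omega)
        rw [Real.dist_eq, abs_le]
        have := hxpsucc j
        constructor <;> linarith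
      exact approx_aux_angular hh (by linarith) (by have := hxpsucc j; linarith)
        (hstep j) hd1 hd2
end

section
/- Let λ₁ ≥ ⋯ ≥ λₙ and μ₁ ≥ ⋯ ≥ μₙ be real sequences with λ₁ + ⋯ + λₙ = μ₁ + ⋯ + μₙ. Then the following are equivalent: (1) λ₁ + ⋯ + λ_k ≤ μ₁ + ⋯ + μ_k for every k = 1, …, n; (2) for every convex function f defined on an interval containing all λᵢ and μⱼ, ∑ₖ f(λₖ) ≤ ∑ₖ f(μₖ). -/
/-- Divided differences of a convex function are monotone in both endpoints. -/
lemma hlp_slope_mono {s : Set ℝ} {f : ℝ → ℝ} (hf : ConvexOn ℝ s f)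
    {c d c' d' : ℝ} (hc : c ∈ s) (hd : d ∈ s) (hc' : c' ∈ s) (hd' : d' ∈ s)
    (h1 : c < d) (h2 : c' < d') (h3 : c ≤ c') (h4 : d ≤ d') :
    (f d - f c) / (d - c) ≤ (f d' - f c') / (d' - c') := by
  have step1 : (f d - f c) / (d - c) ≤ (f d' - f c) / (d' - c) :=
    hf.secant_mono hc hd hd' (ne_of_gt h1) (ne_of_gt (lt_of_le_of_lt h3 h2)) h4
  have step2 : (f c - f d') / (c - d') ≤ (f c' - f d') / (c' - d') :=
    hf.secant_mono hd' hc hc' (ne_of_lt (lt_of_lt_of_le h1 h4)) (ne_of_lt h2) h3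
  have e1 : (f c - f d') / (c - d') = (f d' - f c) / (d' - c) := by
    rw [← neg_div_neg_eq]; ring_nf
  have e2 : (f c' - f d') / (c' - d') = (f d' - f c') / (d' - c') := by
    rw [← neg_div_neg_eq]; ring_nf
  calc (f d - f c) / (d - c) ≤ (f d' - f c) / (d' - c) := step1
    _ = (f c - f d') / (c - d') := e1.symm
    _ ≤ (f c' - f d') / (c' - d') := step2
    _ = (f d' - f c') / (d' - c') := e2

/-- A sum over the first `k` indices of `Fin n` equals a `range k` sum of the extension. -/
lemma hlp_filter_sum {n k : ℕ} (hk : k ≤ n) (v : Fin n → ℝ) :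
    ∑ i ∈ Finset.univ.filter (fun i : Fin n => (i : ℕ) < k), v i
      = ∑ j ∈ Finset.range k, (if h : j < n then v ⟨j, h⟩ else 0) := by
  have h1 : ∑ i ∈ Finset.univ.filter (fun i : Fin n => (i : ℕ) < k), v i
      = ∑ j ∈ Finset.range n,
          (if j < k then (if h : j < n then v ⟨j, h⟩ else 0) else 0) := by
    rw [Finset.sum_filter,
      ← Fin.sum_univ_eq_sum_range (fun j => if j < k then (if h : j < n then v ⟨j, h⟩ else 0) else 0) n]
    refine Finset.sum_congr rfl fun i _ => ?_
    by_cases h : (i : ℕ) < k <;> simp [h, i.isLt]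
  rw [h1, ← Finset.sum_filter]
  congr 1
  ext j
  simp only [Finset.mem_filter, Finset.mem_range]
  omega

/-- Hardy–Littlewood–Pólya: for decreasing real sequences `lam`, `mu` with equal
total sums, the partial sums of `lam` are dominated by those of `mu` iff
`∑ f (lam k) ≤ ∑ f (mu k)` for every convex function `f` on an interval containing
all the entries. -/
theorem hlp_majorization (n : ℕ) (lam mu : Fin n → ℝ)
    (hlam : Antitone lam) (hmu : Antitone mu)
    (hsum : ∑ i, lam i = ∑ i, mu i) :
    (∀ k : ℕ, k ≤ n →
      ∑ i ∈ Finset.univ.filter (fun i : Fin n => (i : ℕ) < k), lam i ≤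
      ∑ i ∈ Finset.univ.filter (fun i : Fin n => (i : ℕ) < k), mu i) ↔
    (∀ (a b : ℝ) (f : ℝ → ℝ), (∀ i, lam i ∈ Set.Icc a b) → (∀ i, mu i ∈ Set.Icc a b) →
      ConvexOn ℝ (Set.Icc a b) f → ∑ i, f (lam i) ≤ ∑ i, f (mu i)) := by
  constructor
  · -- hard direction: partial-sum domination implies the convex inequality
    intro hpart a b f hl hm hf
    by_cases hTall : ∀ i, lam i = mu i
    · exact le_of_eq (Finset.sum_congr rfl fun i _ => by rw [hTall i])
    push_neg at hTall
    obtain ⟨i₀, hi₀⟩ := hTall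
    set T : Finset (Fin n) := Finset.univ.filter (fun i => lam i ≠ mu i) with hTdef
    have hT : T.Nonempty := ⟨i₀, by simp [hTdef, hi₀]⟩
    set c : Fin n → ℝ := fun i => min (lam i) (mu i) with hcdef
    set e : Fin n → ℝ := fun i => max (lam i) (mu i) with hedef
    have hcmem : ∀ i, c i ∈ Set.Icc a b := fun i =>
      ⟨le_min (hl i).1 (hm i).1, (min_le_left _ _).trans (hl i).2⟩
    have hemem : ∀ i, e i ∈ Set.Icc a b := fun i =>
      ⟨(hl i).1.trans (le_max_left _ _), max_le (hl i).2 (hm i).2⟩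
    have hce : ∀ i ∈ T, c i < e i := by
      intro i hi
      have hne : lam i ≠ mu i := by simpa [hTdef] using hi
      exact min_lt_max.mpr hne
    have hcmono : ∀ i j : Fin n, i ≤ j → c j ≤ c i := fun i j h =>
      min_le_min (hlam h) (hmu h)
    have hemono : ∀ i j : Fin n, i ≤ j → e j ≤ e i := fun i j h =>
      max_le_max (hlam h) (hmu h)
    set sl : Fin n → ℝ := fun i => (f (e i) - f (c i)) / (e i - c i) with hsldef
    have hslmono : ∀ i j : Fin n, i ∈ T → j ∈ T → i ≤ j → sl j ≤ sl i := by
      intro i j hi hj hij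
      exact hlp_slope_mono hf (hcmem j) (hemem j) (hcmem i) (hemem i)
        (hce j hj) (hce i hi) (hcmono i j hij) (hemono i j hij)
    set Cmin : ℝ := T.inf' hT sl with hCdef
    have hCle : ∀ i ∈ T, Cmin ≤ sl i := fun i hi => Finset.inf'_le _ hi
    set σ : Fin n → ℝ := fun i => T.sup' hT (fun j => if i ≤ j then sl j else Cmin) with hσdef
    have hσT : ∀ i ∈ T, σ i = sl i := by
      intro i hi
      simp only [hσdef]
      refine le_antisymm (Finset.sup'_le _ _ fun j hj => ?_) ?_
      · split_ifs with h
        · exact hslmono i j hi hj h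
        · exact hCle i hi
      · have h := Finset.le_sup' (fun j => if i ≤ j then sl j else Cmin) hi
        simpa only [le_refl, if_true] using h
    have hσanti : ∀ i j : Fin n, i ≤ j → σ j ≤ σ i := by
      intro i j hij
      simp only [hσdef]
      refine Finset.sup'_le _ _ fun k hk => ?_
      have hbase : (if i ≤ k then sl k else Cmin) ≤ T.sup' hT (fun j => if i ≤ j then sl j else Cmin) :=
        Finset.le_sup' (fun j => if i ≤ j then sl j else Cmin) hk
      by_cases h : j ≤ k
      · rw [if_pos h]
        rw [if_pos (le_trans hij h)] at hbase
        exact hbase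
      · rw [if_neg h]
        refine le_trans ?_ hbase
        split_ifs with h2
        · exact hCle k hk
        · exact le_rfl
    have hterm : ∀ i : Fin n, f (lam i) - f (mu i) = σ i * (lam i - mu i) := by
      intro i
      by_cases heq : lam i = mu i
      · simp [heq]
      · have hiT : i ∈ T := by simp [hTdef, heq]
        rw [hσT i hiT]
        rcases lt_or_gt_of_ne heq with h | h
        · have hc' : c i = lam i := min_eq_left h.le
          have he' : e i = mu i := max_eq_right h.le
          have hne : mu i - lam i ≠ 0 := sub_ne_zero.mpr (ne_of_gt h)
          simp only [hsldef, hc', he']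
          field_simp
          ring
        · have hc' : c i = mu i := min_eq_right h.le
          have he' : e i = lam i := max_eq_left h.le
          have hne : lam i - mu i ≠ 0 := sub_ne_zero.mpr (ne_of_gt h)
          simp only [hsldef, hc', he']
          field_simp
    set σN : ℕ → ℝ := fun j => if h : j < n then σ ⟨j, h⟩ else 0 with hσN
    set dN : ℕ → ℝ := fun j => if h : j < n then lam ⟨j, h⟩ - mu ⟨j, h⟩ else 0 with hdN
    have hmain : ∑ i, f (lam i) - ∑ i, f (mu i) = ∑ j ∈ Finset.range n, σN j • dN j := by
      rw [← Finset.sum_sub_distrib, ← Fin.sum_univ_eq_sum_range (fun j => σN j • dN j) n]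
      refine Finset.sum_congr rfl fun i _ => ?_
      have h := hterm i
      simp only [hσN, hdN, i.isLt, dif_pos, smul_eq_mul, Fin.eta]
      exact h
    have hG : ∀ k, k ≤ n → ∑ j ∈ Finset.range k, dN j ≤ 0 := by
      intro k hk
      have h1 := hlp_filter_sum hk lam
      have h2 := hlp_filter_sum hk mu
      have h3 : ∑ j ∈ Finset.range k, dN j
          = (∑ j ∈ Finset.range k, (if h : j < n then lam ⟨j, h⟩ else 0))
            - ∑ j ∈ Finset.range k, (if h : j < n then mu ⟨j, h⟩ else 0) := by
        rw [← Finset.sum_sub_distrib]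
        refine Finset.sum_congr rfl fun j hj => ?_
        simp only [hdN]
        by_cases h : j < n <;> simp [h]
      rw [h3, ← h1, ← h2]
      have h4 := hpart k hk
      linarith
    have hGn : ∑ j ∈ Finset.range n, dN j = 0 := by
      rw [← Fin.sum_univ_eq_sum_range (fun j => dN j) n]
      have h : ∀ i : Fin n, dN (i : ℕ) = lam i - mu i := fun i => by
        simp only [hdN, i.isLt, dif_pos, Fin.eta]
      rw [Finset.sum_congr rfl fun i _ => h i, Finset.sum_sub_distrib, hsum, sub_self]
    have habel := Finset.sum_range_by_parts σN dN n
    rw [hGn, smul_zero, zero_sub] at habel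
    have hnonneg : 0 ≤ ∑ i ∈ Finset.range (n - 1),
        (σN (i + 1) - σN i) • (∑ j ∈ Finset.range (i + 1), dN j) := by
      refine Finset.sum_nonneg fun i hi => ?_
      have hi' : i < n - 1 := Finset.mem_range.mp hi
      have h1 : i + 1 < n := by omega
      have h2 : i < n := by omega
      have hσle : σN (i + 1) ≤ σN i := by
        simp only [hσN, dif_pos h1, dif_pos h2]
        exact hσanti ⟨i, h2⟩ ⟨i + 1, h1⟩ (by simp [Fin.le_def])
      have hGle := hG (i + 1) (by omega)
      have := sub_nonpos.mpr hσle
      rw [smul_eq_mul]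
      nlinarith
    have hfin : ∑ i, f (lam i) - ∑ i, f (mu i) ≤ 0 := by
      rw [hmain, habel]
      linarith
    linarith
  · -- easy direction: apply the convex inequality to hinge functions
    intro hconv k hk
    rcases Nat.eq_zero_or_pos k with rfl | hk0
    · simp
    have hn : 0 < n := lt_of_lt_of_le hk0 hk
    have hne : (Finset.univ : Finset (Fin n)).Nonempty := ⟨⟨0, hn⟩, Finset.mem_univ _⟩
    set a : ℝ := min (Finset.univ.inf' hne lam) (Finset.univ.inf' hne mu) with ha
    set b : ℝ := max (Finset.univ.sup' hne lam) (Finset.univ.sup' hne mu) with hb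
    have hl : ∀ i, lam i ∈ Set.Icc a b := fun i =>
      ⟨(min_le_left _ _).trans (Finset.inf'_le _ (Finset.mem_univ i)),
       (Finset.le_sup' lam (Finset.mem_univ i)).trans (le_max_left _ _)⟩
    have hm : ∀ i, mu i ∈ Set.Icc a b := fun i =>
      ⟨(min_le_right _ _).trans (Finset.inf'_le _ (Finset.mem_univ i)),
       (Finset.le_sup' mu (Finset.mem_univ i)).trans (le_max_right _ _)⟩
    have hkn : k - 1 < n := by omega
    set idx : Fin n := ⟨k - 1, hkn⟩ with hidx
    set cc : ℝ := mu idx with hcc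
    have hfconv : ConvexOn ℝ (Set.Icc a b) (fun x => max (x - cc) 0) := by
      have h1 : ConvexOn ℝ (Set.Icc a b) (id - fun _ => cc) :=
        (convexOn_id (convex_Icc a b)).sub (concaveOn_const cc (convex_Icc a b))
      have h : ConvexOn ℝ (Set.Icc a b) ((id - fun _ => cc) ⊔ fun _ => (0 : ℝ)) :=
        h1.sup (convexOn_const 0 (convex_Icc a b))
      convert h using 1
      funext x
      simp only [Pi.sup_apply, Pi.sub_apply, id_eq]
    have key := hconv a b _ hl hm hfconv
    have h1 : ∑ i ∈ Finset.univ.filter (fun i : Fin n => (i : ℕ) < k), (lam i - cc)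
        ≤ ∑ i ∈ Finset.univ.filter (fun i : Fin n => (i : ℕ) < k), max (lam i - cc) 0 :=
      Finset.sum_le_sum fun i _ => le_max_left _ _
    have h2 : ∑ i ∈ Finset.univ.filter (fun i : Fin n => (i : ℕ) < k), max (lam i - cc) 0
        ≤ ∑ i, max (lam i - cc) 0 :=
      Finset.sum_le_sum_of_subset_of_nonneg (Finset.subset_univ _)
        (fun i _ _ => le_max_right _ _)
    have h3 : ∑ i, max (mu i - cc) 0
        = ∑ i ∈ Finset.univ.filter (fun i : Fin n => (i : ℕ) < k), (mu i - cc) := by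
      rw [← Finset.sum_filter_add_sum_filter_not Finset.univ (fun i : Fin n => (i : ℕ) < k)
        (fun i => max (mu i - cc) 0)]
      have hz : ∑ i ∈ Finset.univ.filter (fun i : Fin n => ¬ (i : ℕ) < k),
          max (mu i - cc) 0 = 0 := by
        refine Finset.sum_eq_zero fun i hi => ?_
        have hik : ¬ (i : ℕ) < k := (Finset.mem_filter.mp hi).2
        have hle : mu i ≤ cc := hmu (show idx ≤ i by
          rw [Fin.le_def]; simp only [hidx]; omega)
        exact max_eq_right (sub_nonpos.mpr hle)
      have hlf : ∑ i ∈ Finset.univ.filter (fun i : Fin n => (i : ℕ) < k), max (mu i - cc) 0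
          = ∑ i ∈ Finset.univ.filter (fun i : Fin n => (i : ℕ) < k), (mu i - cc) := by
        refine Finset.sum_congr rfl fun i hi => ?_
        have hik : (i : ℕ) < k := (Finset.mem_filter.mp hi).2
        have hle : cc ≤ mu i := hmu (show i ≤ idx by
          rw [Fin.le_def]; simp only [hidx]; omega)
        exact max_eq_left (sub_nonneg.mpr hle)
      rw [hz, add_zero, hlf]
    have h4 : ∑ i ∈ Finset.univ.filter (fun i : Fin n => (i : ℕ) < k), (lam i - cc)
        ≤ ∑ i ∈ Finset.univ.filter (fun i : Fin n => (i : ℕ) < k), (mu i - cc) := by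
      linarith
    rw [Finset.sum_sub_distrib, Finset.sum_sub_distrib] at h4
    linarith
end
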